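/- arXiv:1106.4174 — 3 statements merged into one kernel-verified Lean document; each statement's English description precedes it below -/
import Mathlib

section
/- Let [a,b] ⊂ ℝ with a < b, m ∈ ℕ, and let R(·;ε) ∈ L¹([a,b]; ℂ^{m×m}) for ε ∈ [0,ε₀]. If ‖R(·;ε)‖_{L¹} = O(1) as ε → 0⁺, then R(·;ε) ∈ 𝓜^m if and only if sup_{t∈[a,b]} ‖R^∨(t;ε)‖ → 0 as ε → 0⁺, where R^∨(t;ε) := ∫_a^t R(s;ε) ds. -/
open MeasureTheory Filter Set Topology

noncomputable section

/-- `ℂ^m` with the Euclidean norm. -/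
abbrev Vec (m : ℕ) := EuclideanSpace ℂ (Fin m)

/-- `m × m` complex matrices, viewed as continuous linear operators on `ℂ^m`. -/
abbrev Mat (m : ℕ) := Vec m →L[ℂ] Vec m

/-- `y ∈ W¹₁([a,b]; ℂ^m)`: `y` is absolutely continuous on `[a,b]`,
i.e. an indefinite integral of an `L¹` function. -/
def IsW11 (m : ℕ) (a b : ℝ) (y : ℝ → Vec m) : Prop :=
  ∃ g : ℝ → Vec m, IntegrableOn g (Icc a b) ∧
    ∀ t ∈ Icc a b, y t = y a + ∫ s in a..t, g s

/-- `y` is an absolutely continuous (Carathéodory) solution of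
`y' = A(t) y + f(t)` on `[a,b]`. -/
def IsSol (m : ℕ) (a b : ℝ) (A : ℝ → Mat m) (f : ℝ → Vec m) (y : ℝ → Vec m) : Prop :=
  IntegrableOn (fun t => A t (y t) + f t) (Icc a b) ∧
  ∀ t ∈ Icc a b, y t = y a + ∫ s in a..t, (A s (y s) + f s)

/-- `Z` is the absolutely continuous matrix solution of the Cauchy problem
`Z' = R(t) Z`, `Z(a) = I`. -/
def IsMatSol (m : ℕ) (a b : ℝ) (R : ℝ → Mat m) (Z : ℝ → Mat m) : Prop :=
  IntegrableOn (fun t => R t * Z t) (Icc a b) ∧ Z a = 1 ∧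
  ∀ t ∈ Icc a b, Z t = 1 + ∫ s in a..t, R s * Z s

/-- The class `𝓜^m`: the family `R(·;ε)`, `ε ∈ [0,ε₀]`, belongs to `𝓜^m` iff the matrix
solutions `Z(·;ε)` of `Z' = R(t;ε)Z`, `Z(a;ε) = I` converge to `I` uniformly on `[a,b]`
as `ε → 0⁺`. -/
def MemM (m : ℕ) (a b ε₀ : ℝ) (R : ℝ → ℝ → Mat m) : Prop :=
  ∃ Z : ℝ → ℝ → Mat m,
    (∀ ε ∈ Icc 0 ε₀, IsMatSol m a b (R ε) (Z ε)) ∧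
    TendstoUniformlyOn Z (fun _ => 1) (𝓝[>] (0 : ℝ)) (Icc a b)

open scoped Classical in
/-- The restriction of `y : ℝ → ℂ^m` to `[a,b]`, as an element of `C([a,b]; ℂ^m)`
(junk value `0` if `y` is not continuous on `[a,b]`). -/
def toC (m : ℕ) (a b : ℝ) (y : ℝ → Vec m) : C(Icc a b, Vec m) :=
  if h : ContinuousOn y (Icc a b) then ⟨(Icc a b).restrict y, h.restrict⟩ else 0

/-- `M = ∫_a^t [dH(s)] Y(s)`, a matrix Riemann–Stieltjes integral: for every `e > 0` there
is `δ > 0` such that every tagged partition `a = τ₀ ≤ τ₁ ≤ ⋯ ≤ τ_n = t`, `ξ_i ∈ [τ_i, τ_{i+1}]`,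
of mesh `< δ` has Riemann–Stieltjes sum within `e` of `M`. -/
def IsRSInt (m : ℕ) (H Y : ℝ → Mat m) (a t : ℝ) (M : Mat m) : Prop :=
  ∀ e > 0, ∃ δ > 0, ∀ (n : ℕ) (τ ξ : ℕ → ℝ),
    τ 0 = a → τ n = t →
    (∀ i < n, τ i ≤ τ (i + 1) ∧ τ (i + 1) - τ i < δ ∧ ξ i ∈ Icc (τ i) (τ (i + 1))) →
    ‖(∑ i ∈ Finset.range n, (H (τ (i + 1)) - H (τ i)) * Y (ξ i)) - M‖ < e

/-- `v = ∫_a^t [dH(s)] y(s)`, a vector-valued Riemann–Stieltjes integral. -/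
def IsRSIntVec (m : ℕ) (H : ℝ → Mat m) (y : ℝ → Vec m) (a t : ℝ) (v : Vec m) : Prop :=
  ∀ e > 0, ∃ δ > 0, ∀ (n : ℕ) (τ ξ : ℕ → ℝ),
    τ 0 = a → τ n = t →
    (∀ i < n, τ i ≤ τ (i + 1) ∧ τ (i + 1) - τ i < δ ∧ ξ i ∈ Icc (τ i) (τ (i + 1))) →
    ‖(∑ i ∈ Finset.range n, (H (τ (i + 1)) - H (τ i)) (y (ξ i))) - v‖ < e

/-- `G` is a Green matrix of the semi-homogeneous problem `y' = A(t)y + f`, `Uy = 0`: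
`G` is essentially bounded on the square and, for every `f ∈ L¹`, the function
`t ↦ ∫_a^b G(t,s) f(s) ds` is a solution satisfying the boundary condition. -/
def IsGreen (m : ℕ) (a b : ℝ) (A : ℝ → Mat m) (U : C(Icc a b, Vec m) →L[ℂ] Vec m)
    (G : ℝ → ℝ → Mat m) : Prop :=
  (∃ C, ∀ t ∈ Icc a b, ∀ s ∈ Icc a b, ‖G t s‖ ≤ C) ∧
  ∀ f : ℝ → Vec m, IntegrableOn f (Icc a b) →
    ∃ y : ℝ → Vec m, IsSol m a b A f y ∧ U (toC m a b y) = 0 ∧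
      ∀ t ∈ Icc a b, y t = ∫ s in a..b, (G t s) (f s)

end

set_option maxHeartbeats 1000000
set_option synthInstance.maxHeartbeats 400000
open scoped NNReal

namespace LevinAux

lemma interval_eq_set (f : ℝ → Mat m) {c d : ℝ} (h : c ≤ d) :
    ∫ s in c..d, f s = ∫ s in Icc c d, f s := by
  rw [intervalIntegral.integral_of_le h, integral_Icc_eq_integral_Ioc]

lemma interval_eq_set' (f : ℝ → ℝ) {c d : ℝ} (h : c ≤ d) :
    ∫ s in c..d, f s = ∫ s in Icc c d, f s := by
  rw [intervalIntegral.integral_of_le h, integral_Icc_eq_integral_Ioc]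


lemma ii {E : Type*} [NormedAddCommGroup E] {f : ℝ → E} {c t : ℝ} (h : c ≤ t)
    (hf : IntegrableOn f (Icc c t)) : IntervalIntegrable f volume c t := by
  rw [intervalIntegrable_iff, uIoc_of_le h]
  exact hf.mono_set Ioc_subset_Icc_self

/-- Key bound: the primitive of something dominated by `‖R‖ * D`. -/
lemma prim_bound {m : ℕ} {c d : ℝ} (hcd : c ≤ d) {R : ℝ → Mat m}
    (hR : IntegrableOn R (Icc c d)) (G : ℝ → Mat m)
    (hG : IntegrableOn G (Icc c d)) {D : ℝ} (hD : 0 ≤ D)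
    (hbd : ∀ s ∈ Icc c d, ‖G s‖ ≤ ‖R s‖ * D) :
    ∀ t ∈ Icc c d, ‖∫ s in c..t, G s‖ ≤ (∫ s in Icc c d, ‖R s‖) * D := by
  intro t ht
  have hct : c ≤ t := ht.1
  have hsub : Icc c t ⊆ Icc c d := Icc_subset_Icc le_rfl ht.2
  have h1 : ‖∫ s in c..t, G s‖ ≤ ∫ s in c..t, ‖G s‖ :=
    intervalIntegral.norm_integral_le_integral_norm hct
  have h2 : ∫ s in c..t, ‖G s‖ ≤ ∫ s in c..t, ‖R s‖ * D := by
    apply intervalIntegral.integral_mono_on hct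
    · exact ii hct (hG.mono_set hsub).norm
    · exact ii hct (((hR.mono_set hsub).norm).mul_const D)
    · intro x hx; exact hbd x (hsub hx)
  have h3 : ∫ s in c..t, ‖R s‖ * D = (∫ s in c..t, ‖R s‖) * D :=
    intervalIntegral.integral_mul_const D _
  have h4 : ∫ s in c..t, ‖R s‖ ≤ ∫ s in Icc c d, ‖R s‖ := by
    rw [intervalIntegral.integral_of_le hct]
    refine setIntegral_mono_set hR.norm ?_ ?_
    · exact Filter.Eventually.of_forall fun s => norm_nonneg _
    · exact HasSubset.Subset.eventuallyLE (Ioc_subset_Icc_self.trans hsub)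
  calc ‖∫ s in c..t, G s‖ ≤ ∫ s in c..t, ‖R s‖ * D := le_trans h1 h2
    _ = (∫ s in c..t, ‖R s‖) * D := h3
    _ ≤ (∫ s in Icc c d, ‖R s‖) * D := mul_le_mul_of_nonneg_right h4 hD

end LevinAux

namespace LevinAux

/-- Local existence via contraction when the `L¹` norm is at most `1/2`. -/
lemma loc_exists (m : ℕ) {c d : ℝ} (hcd : c ≤ d) (R : ℝ → Mat m)
    (hR : IntegrableOn R (Icc c d)) (hhalf : (∫ s in Icc c d, ‖R s‖) ≤ 1/2)
    (M : Mat m) :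
    ∃ Z : ℝ → Mat m, IntegrableOn (fun t => R t * Z t) (Icc c d) ∧
      (∀ t ∈ Icc c d, Z t = M + ∫ s in c..t, R s * Z s) ∧
      (∀ t ∈ Icc c d, ‖Z t‖ ≤ 2 * ‖M‖) := by
  classical
  set X := C(Icc c d, Mat m)
  -- extension of a continuous map on Icc to ℝ
  let ext : X → ℝ → Mat m := fun W s => W (projIcc c d hcd s)
  have ext_cont : ∀ W : X, Continuous (ext W) := fun W =>
    W.continuous.comp continuous_projIcc
  have ext_bd : ∀ (W : X) (s : ℝ), ‖ext W s‖ ≤ ‖W‖ := fun W s =>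
    W.norm_coe_le_norm _
  have hint : ∀ W : X, IntegrableOn (fun s => R s * ext W s) (Icc c d) := by
    intro W
    refine Integrable.mono' (hR.norm.mul_const ‖W‖)
      (hR.aestronglyMeasurable.mul ((ext_cont W).aestronglyMeasurable.restrict))
      (Filter.Eventually.of_forall fun s => ?_)
    exact (norm_mul_le _ _).trans (mul_le_mul_of_nonneg_left (ext_bd W s) (norm_nonneg _))
  have hiint : ∀ (W : X), ∀ t ∈ Icc c d, IntervalIntegrable (fun s => R s * ext W s) volume c t :=
    fun W t ht => ii ht.1 ((hint W).mono_set (Icc_subset_Icc le_rfl ht.2))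
  -- the Picard operator
  have cont : ∀ W : X, Continuous fun t : Icc c d => M + ∫ s in c..(t : ℝ), R s * ext W s := by
    intro W
    have h1 := intervalIntegral.continuousOn_primitive_interval (μ := volume) (a := c)
      (b := d) (f := fun s => R s * ext W s) (by rw [uIcc_of_le hcd]; exact hint W)
    rw [uIcc_of_le hcd] at h1
    exact (continuousOn_const.add h1).restrict
  let Φ : X → X := fun W => ⟨fun t => M + ∫ s in c..(t : ℝ), R s * ext W s, cont W⟩
  have key : ∀ (W₁ W₂ : X) (D : ℝ), 0 ≤ D → (∀ x : Icc c d, dist (W₁ x) (W₂ x) ≤ D) →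
      ∀ x : Icc c d, dist (Φ W₁ x) (Φ W₂ x) ≤ (1/2) * D := by
    intro W₁ W₂ D hD hles x
    have hx : (x : ℝ) ∈ Icc c d := x.2
    have hdiff : ∀ s ∈ Icc c d, ‖R s * ext W₁ s - R s * ext W₂ s‖ ≤ ‖R s‖ * D := by
      intro s hs
      rw [← mul_sub]
      refine (norm_mul_le _ _).trans (mul_le_mul_of_nonneg_left ?_ (norm_nonneg _))
      have : ext W₁ s - ext W₂ s = W₁ (projIcc c d hcd s) - W₂ (projIcc c d hcd s) := rfl
      rw [this, ← dist_eq_norm]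
      exact hles _
    have : dist (Φ W₁ x) (Φ W₂ x)
        = ‖∫ s in c..(x : ℝ), (R s * ext W₁ s - R s * ext W₂ s)‖ := by
      rw [dist_eq_norm]
      show ‖(M + ∫ s in c..(x:ℝ), R s * ext W₁ s) - (M + ∫ s in c..(x:ℝ), R s * ext W₂ s)‖ = _
      rw [add_sub_add_left_eq_sub, ← intervalIntegral.integral_sub (hiint W₁ _ hx) (hiint W₂ _ hx)]
    rw [this]
    have hG : IntegrableOn (fun s => R s * ext W₁ s - R s * ext W₂ s) (Icc c d) :=
      (hint W₁).sub (hint W₂)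
    have := prim_bound hcd hR _ hG hD hdiff (x : ℝ) hx
    calc ‖∫ s in c..(x:ℝ), (R s * ext W₁ s - R s * ext W₂ s)‖
        ≤ (∫ s in Icc c d, ‖R s‖) * D := this
      _ ≤ (1/2) * D := mul_le_mul_of_nonneg_right hhalf hD
  have hcontr : ContractingWith (1/2 : ℝ≥0) Φ := by
    constructor
    · rw [← NNReal.coe_lt_one]; norm_num
    · apply LipschitzWith.of_dist_le_mul
      intro W₁ W₂
      have h0 : (0:ℝ) ≤ (1/2 : ℝ) * dist W₁ W₂ := by positivity
      rw [ContinuousMap.dist_le (by positivity)]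
      intro x
      have := key W₁ W₂ (dist W₁ W₂) dist_nonneg (fun y => ContinuousMap.dist_apply_le_dist y) x
      calc dist (Φ W₁ x) (Φ W₂ x) ≤ (1/2) * dist W₁ W₂ := this
        _ = ((1/2 : ℝ≥0) : ℝ) * dist W₁ W₂ := by norm_num
  obtain ⟨Z₀, hZ₀⟩ : ∃ Z₀ : X, Function.IsFixedPt Φ Z₀ :=
    ⟨ContractingWith.fixedPoint Φ hcontr, hcontr.fixedPoint_isFixedPt⟩
  have happ : ∀ x : Icc c d, Z₀ x = M + ∫ s in c..(x : ℝ), R s * ext Z₀ s :=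
    fun x => (DFunLike.congr_fun hZ₀ x).symm
  refine ⟨ext Z₀, hint Z₀, ?_, ?_⟩
  · intro t ht
    have : ext Z₀ t = Z₀ ⟨t, ht⟩ := by
      simp only [ext, projIcc_of_mem hcd ht]
    rw [this, happ ⟨t, ht⟩]
  · -- norm bound
    have hb : ‖Z₀‖ ≤ ‖M‖ + (1/2) * ‖Z₀‖ := by
      rw [ContinuousMap.norm_le _ (by positivity)]
      intro x
      have hx : (x : ℝ) ∈ Icc c d := x.2
      have hbd : ∀ s ∈ Icc c d, ‖R s * ext Z₀ s‖ ≤ ‖R s‖ * ‖Z₀‖ := fun s _ =>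
        (norm_mul_le _ _).trans (mul_le_mul_of_nonneg_left (ext_bd Z₀ s) (norm_nonneg _))
      have h1 := prim_bound hcd hR _ (hint Z₀) (norm_nonneg Z₀) hbd (x : ℝ) hx
      have h2 := happ x
      rw [h2]
      calc ‖M + ∫ s in c..(x:ℝ), R s * ext Z₀ s‖
          ≤ ‖M‖ + ‖∫ s in c..(x:ℝ), R s * ext Z₀ s‖ := norm_add_le _ _
        _ ≤ ‖M‖ + (∫ s in Icc c d, ‖R s‖) * ‖Z₀‖ := by linarith
        _ ≤ ‖M‖ + (1/2) * ‖Z₀‖ := by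
            have := mul_le_mul_of_nonneg_right hhalf (norm_nonneg Z₀); linarith
    have hZnorm : ‖Z₀‖ ≤ 2 * ‖M‖ := by linarith
    intro t ht
    exact (ext_bd Z₀ t).trans hZnorm

end LevinAux

namespace LevinAux

lemma glob_exists_aux (m : ℕ) {a b : ℝ} (R : ℝ → Mat m)
    (hR : IntegrableOn R (Icc a b)) :
    ∀ n : ℕ, ∀ c ∈ Icc a b, ∀ M : Mat m,
      (∫ s in Icc c b, ‖R s‖) ≤ n / 2 →
      ∃ Z : ℝ → Mat m, IntegrableOn (fun t => R t * Z t) (Icc c b) ∧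
        (∀ t ∈ Icc c b, Z t = M + ∫ s in c..t, R s * Z s) ∧
        (∀ t ∈ Icc c b, ‖Z t‖ ≤ 2 ^ (n + 1) * ‖M‖) := by
  intro n
  induction n with
  | zero =>
    intro c hc M hn
    have hcb : c ≤ b := hc.2
    have hRc : IntegrableOn R (Icc c b) := hR.mono_set (Icc_subset_Icc hc.1 le_rfl)
    have hsmall : (∫ s in Icc c b, ‖R s‖) ≤ 1/2 := le_trans hn (by norm_num)
    obtain ⟨Z, h1, h2, h3⟩ := loc_exists m hcb R hRc hsmall M
    refine ⟨Z, h1, h2, fun t ht => (h3 t ht).trans ?_⟩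
    have : (2:ℝ) ≤ 2 ^ (0+1) := by norm_num
    nlinarith [norm_nonneg M]
  | succ n IH =>
    intro c hc M hn
    have hcb : c ≤ b := hc.2
    have hRc : IntegrableOn R (Icc c b) := hR.mono_set (Icc_subset_Icc hc.1 le_rfl)
    by_cases hsmall : (∫ s in Icc c b, ‖R s‖) ≤ 1/2
    · obtain ⟨Z, h1, h2, h3⟩ := loc_exists m hcb R hRc hsmall M
      refine ⟨Z, h1, h2, fun t ht => (h3 t ht).trans ?_⟩
      have h2' : (2:ℝ) ≤ 2 ^ (n + 1 + 1) := by
        calc (2:ℝ) = 2 ^ 1 := by norm_num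
          _ ≤ 2 ^ (n + 1 + 1) := by
            apply pow_le_pow_right₀ one_le_two; omega
      nlinarith [norm_nonneg M]
    · push_neg at hsmall
      -- split the interval by IVT
      set K : ℝ → ℝ := fun x => ∫ s in c..x, ‖R s‖ with hK
      have hKcont : ContinuousOn K (Icc c b) := by
        have h1 := intervalIntegral.continuousOn_primitive_interval (μ := volume) (a := c)
          (b := b) (f := fun s => ‖R s‖) (by rw [uIcc_of_le hcb]; exact hRc.norm)
        rwa [uIcc_of_le hcb] at h1
      have hKc : K c = 0 := intervalIntegral.integral_same
      have hKb : K b = ∫ s in Icc c b, ‖R s‖ := interval_eq_set' _ hcb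
      have hmem : (1/2 : ℝ) ∈ Icc (K c) (K b) := by
        constructor
        · rw [hKc]; norm_num
        · rw [hKb]; exact le_of_lt hsmall
      obtain ⟨d, hd, hKd⟩ := intermediate_value_Icc hcb hKcont hmem
      have hcd : c ≤ d := hd.1
      have hdb : d ≤ b := hd.2
      have hRcd : IntegrableOn R (Icc c d) := hRc.mono_set (Icc_subset_Icc le_rfl hdb)
      have hRdb : IntegrableOn R (Icc d b) := hRc.mono_set (Icc_subset_Icc hcd le_rfl)
      have hIcd : (∫ s in Icc c d, ‖R s‖) = 1/2 := by
        rw [← interval_eq_set' _ hcd]; exact hKd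
      have hadd : K d + (∫ s in d..b, ‖R s‖) = K b :=
        intervalIntegral.integral_add_adjacent_intervals (ii hcd hRcd.norm) (ii hdb hRdb.norm)
      have hIdb : (∫ s in Icc d b, ‖R s‖) ≤ n / 2 := by
        rw [← interval_eq_set' _ hdb]
        rw [hKb, hKd] at hadd
        push_cast at hn
        linarith
      obtain ⟨Z₁, h1int, h1eq, h1bd⟩ := loc_exists m hcd R hRcd (le_of_eq hIcd) M
      have hdmem : d ∈ Icc a b := ⟨hc.1.trans hcd, hdb⟩
      obtain ⟨Z₂, h2int, h2eq, h2bd⟩ := IH d hdmem (Z₁ d) hIdb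
      classical
      set Z : ℝ → Mat m := fun t => if t ≤ d then Z₁ t else Z₂ t with hZdef
      have hZeq1 : ∀ s ∈ Icc c d, Z s = Z₁ s := fun s hs => if_pos hs.2
      have hZ₂d : Z₂ d = Z₁ d := by
        have := h2eq d (left_mem_Icc.mpr hdb)
        rwa [intervalIntegral.integral_same, add_zero] at this
      have hZeq2 : ∀ s ∈ Icc d b, Z s = Z₂ s := by
        intro s hs
        by_cases h : s ≤ d
        · have hsd : s = d := le_antisymm h hs.1
          rw [hsd, hZ₂d]; exact if_pos le_rfl
        · exact if_neg h
      have hZint1 : IntegrableOn (fun t => R t * Z t) (Icc c d) :=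
        h1int.congr_fun (fun s hs => by rw [hZeq1 s hs]) measurableSet_Icc
      have hZint2 : IntegrableOn (fun t => R t * Z t) (Icc d b) :=
        h2int.congr_fun (fun s hs => by rw [hZeq2 s hs]) measurableSet_Icc
      have hunion : Icc c d ∪ Icc d b = Icc c b := Icc_union_Icc_eq_Icc hcd hdb
      have hZint : IntegrableOn (fun t => R t * Z t) (Icc c b) := by
        rw [← hunion]; exact hZint1.union hZint2
      refine ⟨Z, hZint, ?_, ?_⟩
      · intro t ht
        by_cases h : t ≤ d
        · have htcd : t ∈ Icc c d := ⟨ht.1, h⟩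
          have : ∫ s in c..t, R s * Z s = ∫ s in c..t, R s * Z₁ s := by
            apply intervalIntegral.integral_congr
            intro s hs
            rw [uIcc_of_le ht.1] at hs
            exact congrArg (R s * ·) (hZeq1 s ⟨hs.1, hs.2.trans h⟩)
          rw [hZeq1 t htcd, this, ← h1eq t htcd]
        · push_neg at h
          have hdt : d ≤ t := le_of_lt h
          have htdb : t ∈ Icc d b := ⟨hdt, ht.2⟩
          have e1 : ∫ s in c..d, R s * Z s = ∫ s in c..d, R s * Z₁ s :=
            intervalIntegral.integral_congr fun s hs => by
              rw [uIcc_of_le hcd] at hs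
              exact congrArg (R s * ·) (hZeq1 s hs)
          have e2 : ∫ s in d..t, R s * Z s = ∫ s in d..t, R s * Z₂ s :=
            intervalIntegral.integral_congr fun s hs => by
              rw [uIcc_of_le hdt] at hs
              exact congrArg (R s * ·) (hZeq2 s ⟨hs.1, hs.2.trans ht.2⟩)
          have hsplit : (∫ s in c..d, R s * Z s) + (∫ s in d..t, R s * Z s)
              = ∫ s in c..t, R s * Z s :=
            intervalIntegral.integral_add_adjacent_intervals (ii hcd hZint1)
              (ii hdt (hZint2.mono_set (Icc_subset_Icc le_rfl ht.2)))
          have q1 : Z₁ d = M + ∫ s in c..d, R s * Z₁ s := h1eq d (right_mem_Icc.mpr hcd)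
          have q2 : Z₂ t = Z₁ d + ∫ s in d..t, R s * Z₂ s := h2eq t htdb
          rw [hZeq2 t htdb, ← hsplit, e1, e2, q2, q1]
          abel
      · intro t ht
        have hM : (0:ℝ) ≤ ‖M‖ := norm_nonneg M
        by_cases h : t ≤ d
        · have htcd : t ∈ Icc c d := ⟨ht.1, h⟩
          rw [hZeq1 t htcd]
          refine (h1bd t htcd).trans ?_
          have : (2:ℝ) ≤ 2 ^ (n + 1 + 1) := by
            calc (2:ℝ) = 2 ^ 1 := by norm_num
              _ ≤ 2 ^ (n + 1 + 1) := by apply pow_le_pow_right₀ one_le_two; omega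
          nlinarith
        · push_neg at h
          have htdb : t ∈ Icc d b := ⟨le_of_lt h, ht.2⟩
          rw [hZeq2 t htdb]
          refine (h2bd t htdb).trans ?_
          have hZ1d : ‖Z₁ d‖ ≤ 2 * ‖M‖ := h1bd d (right_mem_Icc.mpr hcd)
          calc (2:ℝ) ^ (n+1) * ‖Z₁ d‖ ≤ 2 ^ (n+1) * (2 * ‖M‖) := by
                apply mul_le_mul_of_nonneg_left hZ1d (by positivity)
            _ = 2 ^ (n+1+1) * ‖M‖ := by ring
  
end LevinAux

namespace LevinAux

lemma fubini_tri {m : ℕ} {a t : ℝ} (f g : ℝ → Mat m)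
    (hf : IntegrableOn f (Icc a t)) (hg : IntegrableOn g (Icc a t)) :
    ∫ s in Icc a t, f s * (∫ u in Icc a s, g u)
      = ∫ u in Icc a t, (∫ s in Icc u t, f s) * g u := by
  classical
  set T : Set (ℝ × ℝ) := {p | a ≤ p.2 ∧ p.2 ≤ p.1} with hT
  have hTmeas : MeasurableSet T :=
    ((isClosed_le continuous_const continuous_snd).inter
      (isClosed_le continuous_snd continuous_fst)).measurableSet
  set F : ℝ × ℝ → Mat m := T.indicator (fun p => f p.1 * g p.2) with hF
  have stepA : ∀ s ∈ Icc a t, f s * (∫ u in Icc a s, g u) = ∫ u in Icc a t, F (s, u) := by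
    intro s hs
    have h1 : ∀ u : ℝ, F (s, u) = (Icc a s).indicator (fun u => f s * g u) u := by
      intro u
      by_cases h : u ∈ Icc a s
      · rw [Set.indicator_of_mem h]
        exact Set.indicator_of_mem (show (s, u) ∈ T from ⟨h.1, h.2⟩) _
      · rw [Set.indicator_of_notMem h]
        exact Set.indicator_of_notMem (fun hm => h ⟨hm.1, hm.2⟩) _
    simp_rw [h1]
    rw [setIntegral_indicator measurableSet_Icc,
      inter_eq_self_of_subset_right (Icc_subset_Icc le_rfl hs.2)]
    exact ((ContinuousLinearMap.mul ℂ (Mat m) (f s)).integral_comp_comm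
      (hg.mono_set (Icc_subset_Icc le_rfl hs.2))).symm
  have stepD : ∀ u ∈ Icc a t, (∫ s in Icc a t, F (s, u)) = (∫ s in Icc u t, f s) * g u := by
    intro u hu
    have h1 : ∀ s : ℝ, F (s, u) = (Ici u).indicator (fun s => f s * g u) s := by
      intro s
      by_cases h : u ≤ s
      · rw [Set.indicator_of_mem (mem_Ici.mpr h)]
        exact Set.indicator_of_mem (show (s, u) ∈ T from ⟨hu.1, h⟩) _
      · rw [Set.indicator_of_notMem (fun hm => h (mem_Ici.mp hm))]
        exact Set.indicator_of_notMem (fun hm => h hm.2) _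
    simp_rw [h1]
    rw [setIntegral_indicator measurableSet_Ici]
    have h2 : Icc a t ∩ Ici u = Icc u t := by
      ext x; simp only [mem_inter_iff, mem_Icc, mem_Ici]
      constructor
      · rintro ⟨⟨_, hxt⟩, hux⟩; exact ⟨hux, hxt⟩
      · rintro ⟨hux, hxt⟩; exact ⟨⟨hu.1.trans hux, hxt⟩, hux⟩
    rw [h2]
    exact ((ContinuousLinearMap.mul ℂ (Mat m)).flip (g u)).integral_comp_comm
      (hf.mono_set (Icc_subset_Icc hu.1 le_rfl))
  have hFint : Integrable (Function.uncurry fun s u => F (s, u))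
      ((volume.restrict (Icc a t)).prod (volume.restrict (Icc a t))) := by
    have hmeas : AEStronglyMeasurable (fun p : ℝ × ℝ => f p.1 * g p.2)
        ((volume.restrict (Icc a t)).prod (volume.restrict (Icc a t))) :=
      (hf.aestronglyMeasurable.comp_fst).mul (hg.aestronglyMeasurable.comp_snd)
    have hFmeas : AEStronglyMeasurable F
        ((volume.restrict (Icc a t)).prod (volume.restrict (Icc a t))) :=
      hmeas.indicator hTmeas
    have hdom : Integrable (fun p : ℝ × ℝ => ‖f p.1‖ * ‖g p.2‖)
        ((volume.restrict (Icc a t)).prod (volume.restrict (Icc a t))) :=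
      Integrable.mul_prod hf.norm hg.norm
    refine Integrable.mono' hdom hFmeas (Filter.Eventually.of_forall fun p => ?_)
    show ‖F p‖ ≤ ‖f p.1‖ * ‖g p.2‖
    by_cases h : p ∈ T
    · rw [hF, Set.indicator_of_mem h]
      exact norm_mul_le _ _
    · rw [hF, Set.indicator_of_notMem h, norm_zero]
      positivity
  calc ∫ s in Icc a t, f s * (∫ u in Icc a s, g u)
      = ∫ s in Icc a t, ∫ u in Icc a t, F (s, u) :=
        setIntegral_congr_fun measurableSet_Icc fun s hs => stepA s hs
    _ = ∫ u in Icc a t, ∫ s in Icc a t, F (s, u) :=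
        MeasureTheory.integral_integral_swap hFint
    _ = ∫ u in Icc a t, (∫ s in Icc u t, f s) * g u :=
        setIntegral_congr_fun measurableSet_Icc fun u hu => stepD u hu

end LevinAux

namespace LevinAux

lemma key_est {m : ℕ} {a b : ℝ} (hab : a ≤ b) {R Z : ℝ → Mat m}
    (hRint : IntegrableOn R (Icc a b))
    (hZint : IntegrableOn (fun t => R t * Z t) (Icc a b))
    (hZeq : ∀ t ∈ Icc a b, Z t = 1 + ∫ s in a..t, R s * Z s)
    {B η : ℝ} (hB : ∀ t ∈ Icc a b, ‖Z t‖ ≤ B)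
    (hη : ∀ t ∈ Icc a b, ‖∫ s in a..t, R s‖ ≤ η) :
    ∀ t ∈ Icc a b, ‖Z t - 1‖ ≤ η + 2 * η * ((∫ s in Icc a b, ‖R s‖) * B) := by
  have hB0 : 0 ≤ B := (norm_nonneg _).trans (hB a (left_mem_Icc.mpr hab))
  have hη0 : 0 ≤ η := by
    have := hη a (left_mem_Icc.mpr hab)
    rwa [intervalIntegral.integral_same, norm_zero] at this
  intro t ht
  have hat : a ≤ t := ht.1
  have hsub : Icc a t ⊆ Icc a b := Icc_subset_Icc le_rfl ht.2
  set g : ℝ → Mat m := fun u => R u * Z u with hg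
  have hgt : IntegrableOn g (Icc a t) := hZint.mono_set hsub
  have hRt : IntegrableOn R (Icc a t) := hRint.mono_set hsub
  have hZ1 : ∀ s ∈ Icc a b, Z s - 1 = ∫ u in Icc a s, g u := by
    intro s hs
    rw [hZeq s hs, ← interval_eq_set _ hs.1]
    abel
  -- decomposition
  have hdecomp : Z t - 1 = (∫ s in Icc a t, R s)
      + ∫ u in Icc a t, (∫ s in Icc u t, R s) * g u := by
    have e0 : Z t - 1 = ∫ s in Icc a t, g s := hZ1 t ht
    have e1 : ∫ s in Icc a t, (g s - R s)
        = (∫ s in Icc a t, g s) - ∫ s in Icc a t, R s := integral_sub hgt hRt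
    have e2 : ∫ s in Icc a t, (g s - R s)
        = ∫ s in Icc a t, R s * (∫ u in Icc a s, g u) := by
      apply setIntegral_congr_fun measurableSet_Icc
      intro s hs
      show g s - R s = R s * ∫ u in Icc a s, g u
      rw [← hZ1 s (hsub hs)]
      show R s * Z s - R s = R s * (Z s - 1)
      rw [mul_sub, mul_one]
    have e3 : ∫ s in Icc a t, g s
        = (∫ s in Icc a t, R s) + ∫ s in Icc a t, R s * (∫ u in Icc a s, g u) := by
      rw [← e2]
      rw [e1]; abel
    rw [e0, e3, fubini_tri R g hRt hgt]
  -- bound the second term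
  have hub : ∀ u ∈ Icc a t, ‖(∫ s in Icc u t, R s) * g u‖ ≤ 2 * η * (‖R u‖ * B) := by
    intro u hu
    have hub' : u ∈ Icc a b := hsub hu
    have hut : u ≤ t := hu.2
    have hadd : (∫ s in a..u, R s) + (∫ s in u..t, R s) = ∫ s in a..t, R s :=
      intervalIntegral.integral_add_adjacent_intervals
        (ii hu.1 (hRint.mono_set (Icc_subset_Icc le_rfl hub'.2)))
        (ii hut (hRt.mono_set (Icc_subset_Icc hu.1 le_rfl)))
    have h2η : ‖∫ s in Icc u t, R s‖ ≤ 2 * η := by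
      rw [← interval_eq_set _ hut]
      have : (∫ s in u..t, R s) = (∫ s in a..t, R s) - (∫ s in a..u, R s) := by
        rw [← hadd]; abel
      rw [this]
      calc ‖(∫ s in a..t, R s) - (∫ s in a..u, R s)‖
          ≤ ‖∫ s in a..t, R s‖ + ‖∫ s in a..u, R s‖ := norm_sub_le _ _
        _ ≤ 2 * η := by have := hη t ht; have := hη u hub'; linarith
    have hgu : ‖g u‖ ≤ ‖R u‖ * B := by
      refine (norm_mul_le _ _).trans ?_
      exact mul_le_mul_of_nonneg_left (hB u hub') (norm_nonneg _)
    calc ‖(∫ s in Icc u t, R s) * g u‖ ≤ ‖∫ s in Icc u t, R s‖ * ‖g u‖ := norm_mul_le _ _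
      _ ≤ (2 * η) * (‖R u‖ * B) :=
          mul_le_mul h2η hgu (norm_nonneg _) (by positivity)
  have hnorm2 : ‖∫ u in Icc a t, (∫ s in Icc u t, R s) * g u‖
      ≤ 2 * η * ((∫ s in Icc a b, ‖R s‖) * B) := by
    have hdom : Integrable (fun u => 2 * η * (‖R u‖ * B)) (volume.restrict (Icc a t)) :=
      ((hRt.norm.mul_const B).const_mul (2 * η))
    have h1 : ‖∫ u in Icc a t, (∫ s in Icc u t, R s) * g u‖
        ≤ ∫ u in Icc a t, 2 * η * (‖R u‖ * B) := by
      apply norm_integral_le_of_norm_le hdom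
      rw [ae_restrict_iff' measurableSet_Icc]
      exact Filter.Eventually.of_forall hub
    have h2 : ∫ u in Icc a t, 2 * η * (‖R u‖ * B)
        = 2 * η * B * ∫ u in Icc a t, ‖R u‖ := by
      rw [← integral_const_mul (2 * η * B)]
      congr 1; funext u; ring
    have h3 : ∫ u in Icc a t, ‖R u‖ ≤ ∫ u in Icc a b, ‖R u‖ := by
      refine setIntegral_mono_set hRint.norm ?_ ?_
      · exact Filter.Eventually.of_forall fun s => norm_nonneg _
      · exact HasSubset.Subset.eventuallyLE hsub
    calc ‖∫ u in Icc a t, (∫ s in Icc u t, R s) * g u‖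
        ≤ 2 * η * B * ∫ u in Icc a t, ‖R u‖ := by rw [← h2]; exact h1
      _ ≤ 2 * η * B * ∫ u in Icc a b, ‖R u‖ :=
          mul_le_mul_of_nonneg_left h3 (by positivity)
      _ = 2 * η * ((∫ s in Icc a b, ‖R s‖) * B) := by ring
  calc ‖Z t - 1‖ = ‖(∫ s in Icc a t, R s) + ∫ u in Icc a t, (∫ s in Icc u t, R s) * g u‖ := by
        rw [← hdecomp]
    _ ≤ ‖∫ s in Icc a t, R s‖ + ‖∫ u in Icc a t, (∫ s in Icc u t, R s) * g u‖ := norm_add_le _ _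
    _ ≤ η + 2 * η * ((∫ s in Icc a b, ‖R s‖) * B) := by
        have := hη t ht
        rw [interval_eq_set _ hat] at this
        linarith

end LevinAux


namespace LevinAux

lemma glob_exists (m : ℕ) {a b : ℝ} (hab : a ≤ b) (R : ℝ → Mat m)
    (hR : IntegrableOn R (Icc a b)) :
    ∃ Z : ℝ → Mat m, IsMatSol m a b R Z ∧
      ∀ n : ℕ, (∫ s in Icc a b, ‖R s‖) ≤ n / 2 → ∀ t ∈ Icc a b, ‖Z t‖ ≤ 2 ^ (n + 1) := by
  set I := ∫ s in Icc a b, ‖R s‖ with hI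
  set N := ⌈2 * I⌉₊ with hN
  have hIN : I ≤ (N : ℝ) / 2 := by
    have h := Nat.le_ceil (2 * I)
    rw [← hN] at h
    linarith
  obtain ⟨Z, hint, heq, hbd⟩ := glob_exists_aux m R hR N a (left_mem_Icc.mpr hab) 1 hIN
  have hZa : Z a = 1 := by
    have := heq a (left_mem_Icc.mpr hab)
    rwa [intervalIntegral.integral_same, add_zero] at this
  refine ⟨Z, ⟨hint, hZa, heq⟩, ?_⟩
  intro n hn t ht
  have hNn : N ≤ n := by
    rw [hN]
    refine Nat.ceil_le.mpr ?_
    push_cast at hn ⊢; linarith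
  have h1 : ‖Z t‖ ≤ 2 ^ (N + 1) * ‖(1 : Mat m)‖ := hbd t ht
  have h2 : ‖(1 : Mat m)‖ ≤ 1 := ContinuousLinearMap.norm_id_le
  have h3 : (2 : ℝ) ^ (N + 1) ≤ 2 ^ (n + 1) := by
    apply pow_le_pow_right₀ one_le_two; omega
  have h4 : (0 : ℝ) ≤ 2 ^ (N + 1) := by positivity
  calc ‖Z t‖ ≤ 2 ^ (N + 1) * ‖(1 : Mat m)‖ := h1
    _ ≤ 2 ^ (N + 1) * 1 := mul_le_mul_of_nonneg_left h2 h4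
    _ ≤ 2 ^ (n + 1) := by rw [mul_one]; exact h3

end LevinAux

/-- **Levin's proposition (α)**: under the additional condition, membership
`R(·;ε) ∈ 𝓜^m` is equivalent to the uniform convergence to zero of the indefinite
integrals `R^∨(t;ε) = ∫_a^t R(s;ε) ds`. -/
theorem stmt3_levin_alpha
    (m : ℕ) (a b ε₀ : ℝ) (hab : a < b) (hε₀ : 0 < ε₀)
    (R : ℝ → ℝ → Mat m)
    (hR : ∀ ε ∈ Icc 0 ε₀, IntegrableOn (R ε) (Icc a b))
    (hcond : ∃ C, ∀ᶠ ε in 𝓝[>] (0 : ℝ), (∫ t in Icc a b, ‖R ε t‖) ≤ C) :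
    MemM m a b ε₀ R ↔
      TendstoUniformlyOn (fun ε t => ∫ s in a..t, R ε s) (fun _ => 0)
        (𝓝[>] (0 : ℝ)) (Icc a b) := by
  classical
  have hab' : a ≤ b := le_of_lt hab
  obtain ⟨C₀, hC₀⟩ := hcond
  set C := max C₀ 0 with hC
  have hCev : ∀ᶠ ε in 𝓝[>] (0 : ℝ), (∫ t in Icc a b, ‖R ε t‖) ≤ C :=
    hC₀.mono fun ε h => h.trans (le_max_left _ _)
  have hC0 : 0 ≤ C := le_max_right _ _
  have hev₀ : ∀ᶠ ε in 𝓝[>] (0 : ℝ), ε ∈ Icc 0 ε₀ := by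
    have h : Ioo (0 : ℝ) ε₀ ∈ 𝓝[>] (0 : ℝ) := Ioo_mem_nhdsGT_of_mem ⟨le_rfl, hε₀⟩
    exact Filter.eventually_of_mem h fun x hx => ⟨le_of_lt hx.1, le_of_lt hx.2⟩
  constructor
  · rintro ⟨Z, hZsol, hZunif⟩
    rw [Metric.tendstoUniformlyOn_iff] at hZunif ⊢
    intro e he
    set δ := e / (2 * (1 + C)) with hδdef
    have hδ : 0 < δ := by positivity
    filter_upwards [hCev, hev₀, hZunif δ hδ] with ε hC1 hmem hZ1
    intro t ht
    obtain ⟨hint, hZa, heq⟩ := hZsol ε hmem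
    have hat : a ≤ t := ht.1
    have hsub : Icc a t ⊆ Icc a b := Icc_subset_Icc le_rfl ht.2
    have hZd : ∀ s ∈ Icc a b, ‖Z ε s - 1‖ ≤ δ := by
      intro s hs
      have := hZ1 s hs
      rw [dist_eq_norm, norm_sub_rev] at this
      exact le_of_lt this
    have hRε : IntegrableOn (R ε) (Icc a b) := hR ε hmem
    have hRεt : IntegrableOn (R ε) (Icc a t) := hRε.mono_set hsub
    have hZit : IntegrableOn (fun s => R ε s * Z ε s) (Icc a t) := hint.mono_set hsub
    -- ∫ R = ∫ R Z - ∫ R (Z - 1)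
    have e1 : ∫ s in Icc a t, (R ε s * Z ε s - R ε s)
        = (∫ s in Icc a t, R ε s * Z ε s) - ∫ s in Icc a t, R ε s :=
      integral_sub hZit hRεt
    have e2 : ∫ s in Icc a t, R ε s * Z ε s = Z ε t - 1 := by
      have := heq t ht
      rw [LevinAux.interval_eq_set _ hat] at this
      rw [this]; abel
    have hkey : ∫ s in Icc a t, R ε s
        = (Z ε t - 1) - ∫ s in Icc a t, (R ε s * Z ε s - R ε s) := by
      rw [e1, e2]; abel
    have hsecond : ‖∫ s in Icc a t, (R ε s * Z ε s - R ε s)‖ ≤ C * δ := by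
      have hdom : Integrable (fun s => ‖R ε s‖ * δ) (volume.restrict (Icc a t)) :=
        hRεt.norm.mul_const δ
      have h1 : ‖∫ s in Icc a t, (R ε s * Z ε s - R ε s)‖
          ≤ ∫ s in Icc a t, ‖R ε s‖ * δ := by
        apply norm_integral_le_of_norm_le hdom
        rw [ae_restrict_iff' measurableSet_Icc]
        refine Filter.Eventually.of_forall fun s hs => ?_
        have : R ε s * Z ε s - R ε s = R ε s * (Z ε s - 1) := by
          rw [mul_sub, mul_one]
        rw [this]
        calc ‖R ε s * (Z ε s - 1)‖ ≤ ‖R ε s‖ * ‖Z ε s - 1‖ := norm_mul_le _ _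
          _ ≤ ‖R ε s‖ * δ :=
            mul_le_mul_of_nonneg_left (hZd s (hsub hs)) (norm_nonneg _)
      have h2 : ∫ s in Icc a t, ‖R ε s‖ * δ = (∫ s in Icc a t, ‖R ε s‖) * δ := by
        rw [← integral_mul_const]
      have h3 : ∫ s in Icc a t, ‖R ε s‖ ≤ ∫ s in Icc a b, ‖R ε s‖ := by
        refine setIntegral_mono_set hRε.norm ?_ ?_
        · exact Filter.Eventually.of_forall fun s => norm_nonneg _
        · exact HasSubset.Subset.eventuallyLE hsub
      calc ‖∫ s in Icc a t, (R ε s * Z ε s - R ε s)‖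
          ≤ (∫ s in Icc a t, ‖R ε s‖) * δ := by rw [← h2]; exact h1
        _ ≤ C * δ := by
            have h4 : (∫ s in Icc a t, ‖R ε s‖) ≤ C := h3.trans hC1
            exact mul_le_mul_of_nonneg_right h4 (le_of_lt hδ)
    have hbd : ‖∫ s in a..t, R ε s‖ ≤ δ + C * δ := by
      rw [LevinAux.interval_eq_set _ hat, hkey]
      calc ‖(Z ε t - 1) - ∫ s in Icc a t, (R ε s * Z ε s - R ε s)‖
          ≤ ‖Z ε t - 1‖ + ‖∫ s in Icc a t, (R ε s * Z ε s - R ε s)‖ := norm_sub_le _ _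
        _ ≤ δ + C * δ := add_le_add (hZd t ht) hsecond
    have hlt : δ + C * δ < e := by
      have : δ * (2 * (1 + C)) = e := by
        rw [hδdef]; field_simp
      nlinarith
    rw [dist_eq_norm, zero_sub, norm_neg]
    exact lt_of_le_of_lt hbd hlt
  · intro hUnif
    have hsolex : ∀ ε ∈ Icc (0:ℝ) ε₀, ∃ Z : ℝ → Mat m, IsMatSol m a b (R ε) Z ∧
        ∀ n : ℕ, (∫ s in Icc a b, ‖R ε s‖) ≤ n / 2 → ∀ t ∈ Icc a b, ‖Z t‖ ≤ 2 ^ (n + 1) :=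
      fun ε hε => LevinAux.glob_exists m hab' (R ε) (hR ε hε)
    choose! Z hZsol hZbd using hsolex
    refine ⟨Z, hZsol, ?_⟩
    rw [Metric.tendstoUniformlyOn_iff] at hUnif ⊢
    intro e he
    set N := ⌈2 * C⌉₊ with hN
    set B : ℝ := 2 ^ (N + 1) with hB
    have hB0 : (0:ℝ) < B := by positivity
    set η := e / (2 * (1 + 2 * (C * B))) with hηdef
    have hη : 0 < η := by positivity
    filter_upwards [hCev, hev₀, hUnif η hη] with ε hC1 hmem hsmall
    intro t ht
    obtain ⟨hint, hZa, heq⟩ := hZsol ε hmem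
    have hηbd : ∀ s ∈ Icc a b, ‖∫ u in a..s, R ε u‖ ≤ η := by
      intro s hs
      have := hsmall s hs
      rw [dist_eq_norm, zero_sub, norm_neg] at this
      exact le_of_lt this
    have hCN : C ≤ (N : ℝ) / 2 := by
      have h := Nat.le_ceil (2 * C)
      rw [← hN] at h
      linarith
    have hBbd : ∀ s ∈ Icc a b, ‖Z ε s‖ ≤ B :=
      hZbd ε hmem N (hC1.trans hCN)
    have hest := LevinAux.key_est hab' (hR ε hmem) hint heq hBbd hηbd t ht
    have hIC : (∫ s in Icc a b, ‖R ε s‖) ≤ C := hC1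
    have h2 : η + 2 * η * ((∫ s in Icc a b, ‖R ε s‖) * B) ≤ η + 2 * η * (C * B) := by
      have : (∫ s in Icc a b, ‖R ε s‖) * B ≤ C * B :=
        mul_le_mul_of_nonneg_right hIC (le_of_lt hB0)
      nlinarith
    have hlt : η + 2 * η * (C * B) < e := by
      have : η * (2 * (1 + 2 * (C * B))) = e := by
        rw [hηdef]; field_simp
      nlinarith [mul_pos hη (mul_pos (lt_of_lt_of_le hB0 (le_refl B)) hB0)]
    rw [dist_eq_norm, norm_sub_rev]
    exact lt_of_le_of_lt (hest.trans h2) hlt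
end

section
/- For ε ∈ (0,1] define the 2×2 matrix function on [0,1]: R(t;ε) with zero diagonal, upper-right entry ε^{-1/2} cos(t/ε) and lower-left entry ε^{-1/2} sin(2t/ε). Then the family R(·;ε) belongs to the class 𝓜², i.e., the matrix solution Z(t;ε) of the Cauchy problem Z'(t;ε) = R(t;ε)Z(t;ε), Z(0;ε) = I₂ on [0,1] satisfies sup_{t∈[0,1]} ‖Z(t;ε) − I₂‖ → 0 as ε → 0⁺. -/
open MeasureTheory Filter Set Topology

/-- The 2×2 matrix function of Example 1:
`R(t;ε) = [[0, ε^{-1/2} cos(t/ε)], [ε^{-1/2} sin(2t/ε), 0]]`. -/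
noncomputable def Rex (ε t : ℝ) : Mat 2 :=
  Matrix.toEuclideanCLM (𝕜 := ℂ)
    !![0, (((Real.sqrt ε)⁻¹ * Real.cos (t / ε) : ℝ) : ℂ);
       (((Real.sqrt ε)⁻¹ * Real.sin (2 * t / ε) : ℝ) : ℂ), 0]


/-! ### Auxiliary material for the proof -/

noncomputable section AuxProof

set_option synthInstance.maxHeartbeats 1000000
set_option maxHeartbeats 1000000

namespace Stmt15

abbrev toM (M : Matrix (Fin 2) (Fin 2) ℂ) : Mat 2 := Matrix.toEuclideanCLM (𝕜 := ℂ) M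

lemma toM_apply (M : Matrix (Fin 2) (Fin 2) ℂ) (x : Vec 2) (i : Fin 2) :
    (toM M x) i = M i 0 * x 0 + M i 1 * x 1 := by
  show (WithLp.equiv 2 _) (toM M x) i = _
  rw [WithLp.equiv_apply, Matrix.ofLp_toEuclideanCLM]
  simp [Matrix.toLin'_apply, Matrix.mulVec, dotProduct, Fin.sum_univ_two]

lemma norm_sq_vec (x : Vec 2) : ‖x‖ ^ 2 = ‖x 0‖ ^ 2 + ‖x 1‖ ^ 2 := by
  rw [EuclideanSpace.norm_eq, Real.sq_sqrt (by positivity), Fin.sum_univ_two]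

def C01 : Mat 2 := toM !![0,1;0,0]
def C10 : Mat 2 := toM !![0,0;1,0]
def C00 : Mat 2 := toM !![1,0;0,0]
def C11 : Mat 2 := toM !![0,0;0,1]

lemma norm_toM_le_one (M : Matrix (Fin 2) (Fin 2) ℂ)
    (h : ∀ x : Vec 2, ‖M 0 0 * x 0 + M 0 1 * x 1‖ ^ 2 + ‖M 1 0 * x 0 + M 1 1 * x 1‖ ^ 2 ≤ ‖x‖ ^ 2) :
    ‖toM M‖ ≤ 1 := by
  refine ContinuousLinearMap.opNorm_le_bound _ zero_le_one fun x => ?_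
  rw [one_mul]
  have h2 : ‖toM M x‖ ^ 2 ≤ ‖x‖ ^ 2 := by
    rw [norm_sq_vec (toM M x), toM_apply, toM_apply]; exact h x
  calc ‖toM M x‖ = Real.sqrt (‖toM M x‖ ^ 2) := by rw [Real.sqrt_sq (norm_nonneg _)]
    _ ≤ Real.sqrt (‖x‖ ^ 2) := Real.sqrt_le_sqrt h2
    _ = ‖x‖ := Real.sqrt_sq (norm_nonneg _)

lemma norm_C01 : ‖C01‖ ≤ 1 := norm_toM_le_one _ fun x => by
  simp [norm_sq_vec x]

lemma norm_C10 : ‖C10‖ ≤ 1 := norm_toM_le_one _ fun x => by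
  simp [norm_sq_vec x]

lemma norm_C00 : ‖C00‖ ≤ 1 := norm_toM_le_one _ fun x => by
  simp [norm_sq_vec x]

lemma norm_C11 : ‖C11‖ ≤ 1 := norm_toM_le_one _ fun x => by
  simp [norm_sq_vec x]

lemma C01_mul_C01 : C01 * C01 = 0 := by
  rw [C01, ← map_mul]
  have h : (!![(0:ℂ),1;0,0] * !![0,1;0,0]) = 0 := by
    ext i j; fin_cases i <;> fin_cases j <;> simp [Matrix.mul_apply, Fin.sum_univ_two]
  rw [h, map_zero]

lemma C10_mul_C10 : C10 * C10 = 0 := by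
  rw [C10, ← map_mul]
  have h : (!![(0:ℂ),0;1,0] * !![0,0;1,0]) = 0 := by
    ext i j; fin_cases i <;> fin_cases j <;> simp [Matrix.mul_apply, Fin.sum_univ_two]
  rw [h, map_zero]

lemma C01_mul_C10 : C01 * C10 = C00 := by
  rw [C01, C10, C00, ← map_mul]
  congr 1
  ext i j; fin_cases i <;> fin_cases j <;> simp [Matrix.mul_apply, Fin.sum_univ_two]

lemma C10_mul_C01 : C10 * C01 = C11 := by
  rw [C10, C01, C11, ← map_mul]
  congr 1
  ext i j; fin_cases i <;> fin_cases j <;> simp [Matrix.mul_apply, Fin.sum_univ_two]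

lemma toM_off (x y : ℝ) : toM !![0, (x:ℂ); (y:ℂ), 0] = x • C01 + y • C10 := by
  have h : !![(0:ℂ), (x:ℂ); (y:ℂ), 0]
      = (x:ℂ) • !![0,1;0,0] + (y:ℂ) • !![0,0;1,0] := by
    ext i j; fin_cases i <;> fin_cases j <;> simp
  show Matrix.toEuclideanCLM (𝕜 := ℂ) _ = _
  rw [h, map_add, _root_.map_smul, _root_.map_smul]
  exact congrArg₂ (· + ·) (Complex.coe_smul x (toM !![0,1;0,0])) (Complex.coe_smul y (toM !![0,0;1,0]))

/-- The explicit decomposition of `Rex`. -/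
lemma rex_eq (ε t : ℝ) : Rex ε t
    = ((Real.sqrt ε)⁻¹ * Real.cos (t/ε)) • C01 + ((Real.sqrt ε)⁻¹ * Real.sin (2*t/ε)) • C10 := by
  rw [Rex]; exact toM_off _ _

lemma smul_mul_smul' (x y : ℝ) (M N : Mat 2) : (x • M) * (y • N) = (x*y) • (M*N) := by
  ext v
  simp [ContinuousLinearMap.mul_apply, _root_.map_smul, smul_smul]

/-- An integral Gronwall inequality on `[0,1]`. -/
lemma gronwall {f : ℝ → ℝ} (hfc : Continuous f) {a K : ℝ}
    (ha : 0 ≤ a) (hK : 0 ≤ K)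
    (h : ∀ t ∈ Icc (0:ℝ) 1, f t ≤ a + K * ∫ s in (0:ℝ)..t, f s) :
    ∀ t ∈ Icc (0:ℝ) 1, f t ≤ a * Real.exp (K * t) := by
  set u : ℝ → ℝ := fun t => ∫ s in (0:ℝ)..t, f s with hu
  have hud : ∀ t, HasDerivAt u (f t) t := fun t => (hfc.integral_hasStrictDerivAt 0 t).hasDerivAt
  set g : ℝ → ℝ := fun t => (a + K * u t) * Real.exp (-(K * t)) with hg
  have hgd : ∀ t, HasDerivAt g
      ((K * f t) * Real.exp (-(K*t)) + (a + K * u t) * (Real.exp (-(K*t)) * (-K))) t := by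
    intro t
    have h1 : HasDerivAt (fun t => a + K * u t) (K * f t) t := ((hud t).const_mul K).const_add a
    have h2 : HasDerivAt (fun t => Real.exp (-(K*t))) (Real.exp (-(K*t)) * (-K)) t := by
      have h3 : HasDerivAt (fun t : ℝ => -(K*t)) (-K) t := by
        exact ((hasDerivAt_id t).const_mul K).neg.congr_deriv (by ring)
      exact (Real.hasDerivAt_exp _).comp t h3
    exact h1.mul h2
  have mono : AntitoneOn g (Icc 0 1) := by
    apply antitoneOn_of_deriv_nonpos (convex_Icc 0 1)
    · exact fun x _ => ((hgd x).continuousAt).continuousWithinAt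
    · exact fun x _ => (hgd x).differentiableAt.differentiableWithinAt
    · intro x hx
      rw [(hgd x).deriv]
      have hx' : x ∈ Icc (0:ℝ) 1 := interior_subset hx
      have hfx := h x hx'
      have hexp : 0 < Real.exp (-(K*x)) := Real.exp_pos _
      nlinarith [mul_le_mul_of_nonneg_left hfx (mul_nonneg hK hexp.le)]
  intro t ht
  have h0 : g t ≤ g 0 := mono (by constructor <;> norm_num) ht ht.1
  have hg0 : g 0 = a := by simp [hg, hu]
  rw [hg0] at h0
  have hE : (0:ℝ) < Real.exp (K*t) := Real.exp_pos _
  have key : a + K * u t ≤ a * Real.exp (K*t) := by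
    have h4 : (a + K * u t) * Real.exp (-(K*t)) ≤ a := h0
    rw [Real.exp_neg, ← div_eq_mul_inv, div_le_iff₀ hE] at h4
    linarith
  calc f t ≤ a + K * u t := h t ht
    _ ≤ a * Real.exp (K*t) := key

lemma int_abs_pow (C : ℝ) (hC : 0 ≤ C) (n : ℕ) (t : ℝ) :
    |∫ s in (0:ℝ)..t, C * |s| ^ n| = C * |t| ^ (n+1) / (n+1) := by
  rcases le_total 0 t with h | h
  · have hcong : ∫ s in (0:ℝ)..t, C * |s| ^ n = ∫ s in (0:ℝ)..t, C * s ^ n := by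
      apply intervalIntegral.integral_congr
      intro s hs
      rw [uIcc_of_le h] at hs
      show C * |s| ^ n = C * s ^ n
      rw [abs_of_nonneg hs.1]
    rw [hcong, intervalIntegral.integral_const_mul, integral_pow, abs_of_nonneg h]
    rw [zero_pow (Nat.succ_ne_zero n), sub_zero]
    have hnn : (0:ℝ) ≤ C * (t ^ (n+1) / (n+1)) := by positivity
    rw [abs_of_nonneg hnn]
    ring
  · have hcong : ∫ s in (0:ℝ)..t, C * |s| ^ n = ∫ s in (0:ℝ)..t, C * (-s) ^ n := by
      apply intervalIntegral.integral_congr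
      intro s hs
      rw [uIcc_of_ge h] at hs
      show C * |s| ^ n = C * (-s) ^ n
      rw [abs_of_nonpos hs.2]
    rw [hcong]
    have hneg : ∫ s in (0:ℝ)..t, C * (-s) ^ n = ∫ s in (-t)..(-0:ℝ), C * s ^ n :=
      intervalIntegral.integral_comp_neg (fun s => C * s ^ n)
    rw [neg_zero] at hneg
    rw [hneg, intervalIntegral.integral_const_mul, integral_pow]
    rw [zero_pow (Nat.succ_ne_zero n), zero_sub]
    have hnt : (0:ℝ) ≤ (-t) ^ (n+1) := pow_nonneg (neg_nonneg.2 h) _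
    have hle : C * (-(-t) ^ (n+1) / (↑n+1)) ≤ 0 := by
      apply mul_nonpos_of_nonneg_of_nonpos hC
      apply div_nonpos_of_nonpos_of_nonneg (by linarith) (by positivity)
    rw [abs_of_nonpos hle, abs_of_nonpos h]
    ring

/-- Existence of a continuous global solution of the linear integral equation. -/
lemma exists_Z {R : ℝ → Mat 2} (hRc : Continuous R) {K : ℝ} (hK : ∀ t, ‖R t‖ ≤ K) :
    ∃ Z : ℝ → Mat 2, Continuous Z ∧ ∀ t, Z t = 1 + ∫ s in (0:ℝ)..t, R s * Z s := by
  have hK0 : 0 ≤ K := le_trans (norm_nonneg _) (hK 0)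
  set pic : ℕ → ℝ → Mat 2 :=
    fun n => Nat.rec (motive := fun _ => ℝ → Mat 2) (fun _ => 1)
      (fun _ p => fun t => ∫ s in (0:ℝ)..t, R s * p s) n with hpic
  have pic_succ : ∀ n t, pic (n+1) t = ∫ s in (0:ℝ)..t, R s * pic n s := fun n t => rfl
  have pic_cont : ∀ n, Continuous (pic n) := by
    intro n
    induction n with
    | zero => exact continuous_const
    | succ n ih =>
      exact intervalIntegral.continuous_primitive
        (fun a b => (hRc.mul ih).intervalIntegrable a b) 0
  have pic_bound : ∀ n t, ‖pic n t‖ ≤ K ^ n * |t| ^ n / n.factorial := by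
    intro n
    induction n with
    | zero => intro t; show ‖(1:Mat 2)‖ ≤ _; rw [norm_one]; norm_num
    | succ n ih =>
      intro t
      have hfb : ∀ s, ‖R s * pic n s‖ ≤ (K ^ (n+1) / n.factorial) * |s| ^ n := by
        intro s
        calc ‖R s * pic n s‖ ≤ ‖R s‖ * ‖pic n s‖ := norm_mul_le _ _
          _ ≤ K * (K ^ n * |s| ^ n / n.factorial) :=
              mul_le_mul (hK s) (ih s) (norm_nonneg _) hK0
          _ = (K ^ (n+1) / n.factorial) * |s| ^ n := by ring
      have hCb : (0:ℝ) ≤ K ^ (n+1) / n.factorial := by positivity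
      have hgi : IntervalIntegrable (fun s => (K ^ (n+1) / (n.factorial:ℝ)) * |s| ^ n)
          volume 0 t := (continuous_const.mul (continuous_abs.pow n)).intervalIntegrable 0 t
      have hfac : ((n.factorial:ℝ)) ≠ 0 := by positivity
      calc ‖pic (n+1) t‖ = ‖∫ s in (0:ℝ)..t, R s * pic n s‖ := by rw [pic_succ]
        _ ≤ |∫ s in (0:ℝ)..t, (K ^ (n+1) / n.factorial) * |s| ^ n| :=
            intervalIntegral.norm_integral_le_abs_of_norm_le
              (Filter.Eventually.of_forall fun s => hfb s) hgi
        _ = (K ^ (n+1) / n.factorial) * |t| ^ (n+1) / (n+1) := int_abs_pow _ hCb n t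
        _ = K ^ (n+1) * |t| ^ (n+1) / (n+1).factorial := by
            rw [Nat.factorial_succ]
            push_cast
            rw [div_mul_eq_mul_div, div_div, mul_comm ((n:ℝ)+1) (n.factorial:ℝ)]
  have bnd : ∀ n t, ‖pic n t‖ ≤ (K * |t|) ^ n / n.factorial := by
    intro n t
    calc ‖pic n t‖ ≤ K ^ n * |t| ^ n / n.factorial := pic_bound n t
      _ = (K * |t|) ^ n / n.factorial := by rw [mul_pow]
  have hsum : ∀ t : ℝ, Summable (fun n => pic n t) := by
    intro t
    exact Summable.of_norm_bounded (Real.summable_pow_div_factorial (K * |t|)) (bnd · t)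
  set Z : ℝ → Mat 2 := fun t => ∑' n, pic n t with hZ
  have hZc : Continuous Z := by
    rw [continuous_iff_continuousAt]
    intro t
    have hcont : ContinuousOn Z (Icc (-(|t|+1)) (|t|+1)) := by
      apply continuousOn_tsum (fun n => (pic_cont n).continuousOn)
        (Real.summable_pow_div_factorial (K * (|t|+1)))
      intro n x hx
      have hxb : |x| ≤ |t| + 1 := abs_le.2 ⟨hx.1, hx.2⟩
      calc ‖pic n x‖ ≤ (K * |x|) ^ n / n.factorial := bnd n x
        _ ≤ (K * (|t|+1)) ^ n / n.factorial := by
            apply div_le_div_of_nonneg_right ?_ ?_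
            · exact pow_le_pow_left₀ (by positivity) (mul_le_mul_of_nonneg_left hxb hK0) n
            · positivity
    apply hcont.continuousAt
    exact Icc_mem_nhds (by linarith [neg_abs_le t]) (by linarith [le_abs_self t])
  refine ⟨Z, hZc, fun t => ?_⟩
  have hsum1 : Summable fun n => pic (n+1) t := (summable_nat_add_iff 1).mpr (hsum t)
  have hZt : Z t = 1 + ∑' n, pic (n+1) t := by
    exact Summable.tsum_eq_zero_add (f := fun n => pic n t) (hsum t)
  have hlim1 : Filter.Tendsto (fun N => ∑ n ∈ Finset.range N, pic (n+1) t)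
      Filter.atTop (𝓝 (∑' n, pic (n+1) t)) := hsum1.hasSum.tendsto_sum_nat
  have hFt : ∀ s : ℝ, Filter.Tendsto (fun N => ∑ n ∈ Finset.range N, R s * pic n s)
      Filter.atTop (𝓝 (R s * Z s)) := by
    intro s
    have h1 : Filter.Tendsto (fun N => ∑ n ∈ Finset.range N, pic n s)
        Filter.atTop (𝓝 (Z s)) := (hsum s).hasSum.tendsto_sum_nat
    have h2 := Filter.Tendsto.mul (tendsto_const_nhds (x := R s)) h1
    simpa [Finset.mul_sum] using h2
  have hmeas : ∀ N : ℕ, AEStronglyMeasurable (fun s => ∑ n ∈ Finset.range N, R s * pic n s)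
      (volume.restrict (Set.uIoc 0 t)) := by
    intro N
    exact (continuous_finset_sum _ fun n _ => hRc.mul (pic_cont n)).aestronglyMeasurable
  have hdom : ∀ N : ℕ, ∀ᵐ s ∂volume, s ∈ Set.uIoc 0 t →
      ‖∑ n ∈ Finset.range N, R s * pic n s‖ ≤ K * Real.exp (K * |t|) := by
    intro N
    apply Filter.Eventually.of_forall
    intro s hs
    have hsb : |s| ≤ |t| := by
      have h1 : -|t| ≤ s :=
        le_trans (le_min (neg_nonpos.2 (abs_nonneg t)) (neg_abs_le t)) hs.1.le
      have h2 : s ≤ |t| := le_trans hs.2 (max_le (abs_nonneg t) (le_abs_self t))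
      exact abs_le.2 ⟨h1, h2⟩
    calc ‖∑ n ∈ Finset.range N, R s * pic n s‖
        ≤ ∑ n ∈ Finset.range N, ‖R s * pic n s‖ := norm_sum_le _ _
      _ ≤ ∑ n ∈ Finset.range N, K * ((K * |s|) ^ n / n.factorial) := by
          apply Finset.sum_le_sum
          intro n _
          calc ‖R s * pic n s‖ ≤ ‖R s‖ * ‖pic n s‖ := norm_mul_le _ _
            _ ≤ K * ((K * |s|) ^ n / n.factorial) :=
                mul_le_mul (hK s) (bnd n s) (norm_nonneg _) hK0
      _ = K * ∑ n ∈ Finset.range N, (K * |s|) ^ n / n.factorial := by rw [Finset.mul_sum]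
      _ ≤ K * Real.exp (K * |s|) :=
          mul_le_mul_of_nonneg_left (Real.sum_le_exp_of_nonneg (by positivity) N) hK0
      _ ≤ K * Real.exp (K * |t|) := by
          apply mul_le_mul_of_nonneg_left _ hK0
          exact Real.exp_le_exp.2 (mul_le_mul_of_nonneg_left hsb hK0)
  have hdct := intervalIntegral.tendsto_integral_filter_of_dominated_convergence
    (μ := volume) (F := fun N s => ∑ n ∈ Finset.range N, R s * pic n s)
    (f := fun s => R s * Z s) (a := 0) (b := t)
    (fun _ => K * Real.exp (K * |t|))
    (Filter.Eventually.of_forall hmeas) (Filter.Eventually.of_forall hdom)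
    intervalIntegrable_const
    (Filter.Eventually.of_forall fun s _ => hFt s)
  have hid : ∀ N : ℕ, (∫ s in (0:ℝ)..t, ∑ n ∈ Finset.range N, R s * pic n s)
      = ∑ n ∈ Finset.range N, pic (n+1) t := by
    intro N
    rw [intervalIntegral.integral_finset_sum (f := fun n s => R s * pic n s)
      (fun n _ => (hRc.mul (pic_cont n)).intervalIntegrable 0 t)]
  simp only [hid] at hdct
  have hkey : ∫ s in (0:ℝ)..t, R s * Z s = ∑' n, pic (n+1) t :=
    tendsto_nhds_unique hdct hlim1
  rw [hZt, hkey]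

/-- The primitive `W(t) = ∫₀ᵗ R`. -/
def Wf (ε t : ℝ) : Mat 2 :=
  (Real.sqrt ε * Real.sin (t/ε)) • C01 + (Real.sqrt ε * ((1 - Real.cos (2*t/ε))/2)) • C10

/-- `P = W * R`. -/
def Pf (ε t : ℝ) : Mat 2 :=
  (Real.sin (t/ε) * Real.sin (2*t/ε)) • C00 + ((1 - Real.cos (2*t/ε))/2 * Real.cos (t/ε)) • C11

/-- The primitive `V(t) = ∫₀ᵗ P`. -/
def Vf (ε t : ℝ) : Mat 2 :=
  (2*ε/3 * Real.sin (t/ε)^3) • C00 + (ε/3 * Real.sin (t/ε)^3) • C11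

lemma Wf_zero (ε : ℝ) : Wf ε 0 = 0 := by ext v; simp [Wf]

lemma Vf_zero (ε : ℝ) : Vf ε 0 = 0 := by ext v; simp [Vf]

lemma Pf_cont (ε : ℝ) : Continuous (Pf ε) := by
  unfold Pf
  fun_prop

lemma Rex_cont (ε : ℝ) : Continuous (fun t => Rex ε t) := by
  have h : (fun t => Rex ε t) = fun t =>
      ((Real.sqrt ε)⁻¹ * Real.cos (t/ε)) • C01 + ((Real.sqrt ε)⁻¹ * Real.sin (2*t/ε)) • C10 :=
    funext (rex_eq ε)
  rw [h]
  fun_prop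

lemma Rex_norm (ε t : ℝ) : ‖Rex ε t‖ ≤ 2 * (Real.sqrt ε)⁻¹ := by
  have h0 : (0:ℝ) ≤ (Real.sqrt ε)⁻¹ := inv_nonneg.2 (Real.sqrt_nonneg ε)
  rw [rex_eq]
  calc ‖_ • C01 + _ • C10‖ ≤ ‖((Real.sqrt ε)⁻¹ * Real.cos (t/ε)) • C01‖
        + ‖((Real.sqrt ε)⁻¹ * Real.sin (2*t/ε)) • C10‖ := norm_add_le _ _
    _ ≤ (Real.sqrt ε)⁻¹ * 1 + (Real.sqrt ε)⁻¹ * 1 := by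
        apply add_le_add
        · refine le_trans (ContinuousLinearMap.opNorm_smul_le _ _) ?_
          rw [Real.norm_eq_abs, abs_mul, abs_of_nonneg h0]
          apply mul_le_mul (by nlinarith [Real.abs_cos_le_one (t/ε)]) norm_C01 (norm_nonneg _) h0
        · refine le_trans (ContinuousLinearMap.opNorm_smul_le _ _) ?_
          rw [Real.norm_eq_abs, abs_mul, abs_of_nonneg h0]
          apply mul_le_mul (by nlinarith [Real.abs_sin_le_one (2*t/ε)]) norm_C10 (norm_nonneg _) h0
    _ = 2 * (Real.sqrt ε)⁻¹ := by ring

lemma Wf_norm (ε t : ℝ) : ‖Wf ε t‖ ≤ 2 * Real.sqrt ε := by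
  have h0 : (0:ℝ) ≤ Real.sqrt ε := Real.sqrt_nonneg ε
  have hc : |(1 - Real.cos (2*t/ε))/2| ≤ 1 := by
    have h1 := Real.cos_le_one (2*t/ε)
    have h2 := Real.neg_one_le_cos (2*t/ε)
    rw [abs_le]; constructor <;> linarith
  calc ‖Wf ε t‖ ≤ ‖(Real.sqrt ε * Real.sin (t/ε)) • C01‖
        + ‖(Real.sqrt ε * ((1 - Real.cos (2*t/ε))/2)) • C10‖ := norm_add_le _ _
    _ ≤ Real.sqrt ε * 1 + Real.sqrt ε * 1 := by
        apply add_le_add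
        · refine le_trans (ContinuousLinearMap.opNorm_smul_le _ _) ?_
          rw [Real.norm_eq_abs, abs_mul, abs_of_nonneg h0]
          apply mul_le_mul (by nlinarith [Real.abs_sin_le_one (t/ε)]) norm_C01 (norm_nonneg _) h0
        · refine le_trans (ContinuousLinearMap.opNorm_smul_le _ _) ?_
          rw [Real.norm_eq_abs, abs_mul, abs_of_nonneg h0]
          apply mul_le_mul (by nlinarith [hc]) norm_C10 (norm_nonneg _) h0
    _ = 2 * Real.sqrt ε := by ring

lemma Pf_norm (ε t : ℝ) : ‖Pf ε t‖ ≤ 2 := by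
  have hc : |(1 - Real.cos (2*t/ε))/2| ≤ 1 := by
    have h1 := Real.cos_le_one (2*t/ε)
    have h2 := Real.neg_one_le_cos (2*t/ε)
    rw [abs_le]; constructor <;> linarith
  have h1 : |Real.sin (t/ε) * Real.sin (2*t/ε)| ≤ 1 := by
    rw [abs_mul]
    exact mul_le_one₀ (Real.abs_sin_le_one _) (abs_nonneg _) (Real.abs_sin_le_one _)
  have h2 : |(1 - Real.cos (2*t/ε))/2 * Real.cos (t/ε)| ≤ 1 := by
    rw [abs_mul]
    exact mul_le_one₀ hc (abs_nonneg _) (Real.abs_cos_le_one _)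
  calc ‖Pf ε t‖ ≤ ‖(Real.sin (t/ε) * Real.sin (2*t/ε)) • C00‖
        + ‖((1 - Real.cos (2*t/ε))/2 * Real.cos (t/ε)) • C11‖ := norm_add_le _ _
    _ ≤ 1 * 1 + 1 * 1 := by
        apply add_le_add
        · refine le_trans (ContinuousLinearMap.opNorm_smul_le _ _) ?_
          rw [Real.norm_eq_abs]
          exact mul_le_mul h1 norm_C00 (norm_nonneg _) zero_le_one
        · refine le_trans (ContinuousLinearMap.opNorm_smul_le _ _) ?_
          rw [Real.norm_eq_abs]
          exact mul_le_mul h2 norm_C11 (norm_nonneg _) zero_le_one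
    _ = 2 := by norm_num

lemma Vf_norm {ε : ℝ} (hε : 0 ≤ ε) (t : ℝ) : ‖Vf ε t‖ ≤ ε := by
  have hs : |Real.sin (t/ε)^3| ≤ 1 := by
    rw [abs_pow]
    exact pow_le_one₀ (abs_nonneg _) (Real.abs_sin_le_one _)
  calc ‖Vf ε t‖ ≤ ‖(2*ε/3 * Real.sin (t/ε)^3) • C00‖ + ‖(ε/3 * Real.sin (t/ε)^3) • C11‖ :=
        norm_add_le _ _
    _ ≤ (2*ε/3) * 1 + (ε/3) * 1 := by
        apply add_le_add
        · refine le_trans (ContinuousLinearMap.opNorm_smul_le _ _) ?_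
          rw [Real.norm_eq_abs, abs_mul]
          apply mul_le_mul ?_ norm_C00 (norm_nonneg _) (by positivity)
          rw [abs_of_nonneg (by positivity : (0:ℝ) ≤ 2*ε/3)]
          nlinarith [hs, abs_nonneg (Real.sin (t/ε)^3)]
        · refine le_trans (ContinuousLinearMap.opNorm_smul_le _ _) ?_
          rw [Real.norm_eq_abs, abs_mul]
          apply mul_le_mul ?_ norm_C11 (norm_nonneg _) (by positivity)
          rw [abs_of_nonneg (by positivity : (0:ℝ) ≤ ε/3)]
          nlinarith [hs, abs_nonneg (Real.sin (t/ε)^3)]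
    _ = ε := by ring

lemma hasDerivAt_sin_div {ε : ℝ} (t : ℝ) :
    HasDerivAt (fun t => Real.sin (t/ε)) (Real.cos (t/ε) * (1/ε)) t :=
  HasDerivAt.comp (h₂ := Real.sin) t (Real.hasDerivAt_sin (t/ε)) ((hasDerivAt_id t).div_const ε)

lemma hasDerivAt_cos_two_div {ε : ℝ} (t : ℝ) :
    HasDerivAt (fun t => Real.cos (2*t/ε)) (-Real.sin (2*t/ε) * (2/ε)) t := by
  have h2 : HasDerivAt (fun t : ℝ => 2*t/ε) (2/ε) t := by
    simpa using ((hasDerivAt_id t).const_mul (2:ℝ)).div_const ε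
  exact (Real.hasDerivAt_cos (2*t/ε)).comp t h2

lemma Wf_deriv {ε : ℝ} (hε : 0 < ε) (t : ℝ) : HasDerivAt (Wf ε) (Rex ε t) t := by
  have hsq : Real.sqrt ε * Real.sqrt ε = ε := Real.mul_self_sqrt hε.le
  have hsqne : Real.sqrt ε ≠ 0 := ne_of_gt (Real.sqrt_pos.2 hε)
  have hεne : ε ≠ 0 := ne_of_gt hε
  rw [rex_eq]
  have h1 : HasDerivAt (fun t => Real.sqrt ε * Real.sin (t/ε))
      ((Real.sqrt ε)⁻¹ * Real.cos (t/ε)) t := by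
    have h := (hasDerivAt_sin_div (ε := ε) t).const_mul (Real.sqrt ε)
    refine h.congr_deriv ?_; symm
    field_simp
    linear_combination (-(Real.cos (t/ε))) * hsq
  have h2 : HasDerivAt (fun t => Real.sqrt ε * ((1 - Real.cos (2*t/ε))/2))
      ((Real.sqrt ε)⁻¹ * Real.sin (2*t/ε)) t := by
    have h := (((hasDerivAt_cos_two_div (ε := ε) t).const_sub 1).div_const 2).const_mul
      (Real.sqrt ε)
    refine h.congr_deriv ?_; symm
    field_simp
    linear_combination (-(Real.sin (2*t/ε))) * hsq
  exact (h1.smul_const C01).add (h2.smul_const C10)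

lemma Wf_mul_Rex {ε : ℝ} (hε : 0 < ε) (t : ℝ) : Wf ε t * Rex ε t = Pf ε t := by
  have hsqne : Real.sqrt ε ≠ 0 := ne_of_gt (Real.sqrt_pos.2 hε)
  have e1 : Real.sqrt ε * Real.sin (t/ε) * ((Real.sqrt ε)⁻¹ * Real.sin (2*t/ε))
      = Real.sin (t/ε) * Real.sin (2*t/ε) := by
    field_simp
  have e2 : Real.sqrt ε * ((1 - Real.cos (2*t/ε))/2) * ((Real.sqrt ε)⁻¹ * Real.cos (t/ε))
      = (1 - Real.cos (2*t/ε))/2 * Real.cos (t/ε) := by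
    field_simp
  have sz : ∀ x : ℝ, x • (0 : Mat 2) = 0 := fun x => by ext v; simp
  rw [rex_eq, Wf, Pf, add_mul, mul_add, mul_add,
    smul_mul_smul', smul_mul_smul', smul_mul_smul', smul_mul_smul',
    C01_mul_C01, C01_mul_C10, C10_mul_C01, C10_mul_C10, sz, sz,
    e1, e2]
  abel

lemma Vf_deriv {ε : ℝ} (hε : 0 < ε) (t : ℝ) : HasDerivAt (Vf ε) (Pf ε t) t := by
  have hεne : ε ≠ 0 := ne_of_gt hε
  have pyth := Real.sin_sq_add_cos_sq (t/ε)
  have h1 : HasDerivAt (fun t => 2*ε/3 * Real.sin (t/ε)^3)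
      (Real.sin (t/ε) * Real.sin (2*t/ε)) t := by
    have h := ((hasDerivAt_sin_div (ε := ε) t).pow 3).const_mul (2*ε/3)
    refine h.congr_deriv ?_; symm
    rw [mul_div_assoc 2 t ε, Real.sin_two_mul]
    field_simp
    ring
  have h2 : HasDerivAt (fun t => ε/3 * Real.sin (t/ε)^3)
      ((1 - Real.cos (2*t/ε))/2 * Real.cos (t/ε)) t := by
    have h := ((hasDerivAt_sin_div (ε := ε) t).pow 3).const_mul (ε/3)
    refine h.congr_deriv ?_; symm
    rw [mul_div_assoc 2 t ε, Real.cos_two_mul']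
    field_simp
    linear_combination (-(Real.cos (t/ε)) * 3) * pyth
  exact (h1.smul_const C00).add (h2.smul_const C11)

/-- The key quantitative estimate. -/
lemma estimate {ε : ℝ} (hε : 0 < ε) (hε' : ε ≤ 1/16) {Z : ℝ → Mat 2}
    (hZc : Continuous Z) (heq : ∀ t, Z t = 1 + ∫ s in (0:ℝ)..t, Rex ε s * Z s) :
    ∀ t ∈ Icc (0:ℝ) 1, ‖Z t - 1‖ ≤ 2056 * Real.sqrt ε := by
  have hsq : Real.sqrt ε * Real.sqrt ε = ε := Real.mul_self_sqrt hε.le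
  have hsqpos : 0 < Real.sqrt ε := Real.sqrt_pos.2 hε
  have hsq14 : Real.sqrt ε ≤ 1/4 := by
    rw [show (1:ℝ)/4 = Real.sqrt (1/16) by
      rw [show (1:ℝ)/16 = (1/4)^2 by norm_num, Real.sqrt_sq (by norm_num)]]
    exact Real.sqrt_le_sqrt hε'
  have hεsq : ε ≤ Real.sqrt ε := by nlinarith
  have hZ0 : Z 0 = 1 := by simpa using heq 0
  have hZd : ∀ t, HasDerivAt Z (Rex ε t * Z t) t := by
    intro t
    have hcont : Continuous fun s => Rex ε s * Z s := (Rex_cont ε).mul hZc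
    have h1 := ((hcont.integral_hasStrictDerivAt 0 t).hasDerivAt).const_add (1 : Mat 2)
    exact h1.congr_of_eventuallyEq (Filter.Eventually.of_forall heq)
  have hgd : ∀ x, HasDerivAt (fun s => Z s - Wf ε s * Z s) (-(Pf ε x * Z x)) x := by
    intro x
    have h1 : HasDerivAt (fun s => Wf ε s * Z s)
        (Rex ε x * Z x + Wf ε x * (Rex ε x * Z x)) x := (Wf_deriv hε x).mul (hZd x)
    have h2 := (hZd x).sub h1
    have h3 : Rex ε x * Z x - (Rex ε x * Z x + Wf ε x * (Rex ε x * Z x))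
        = -(Pf ε x * Z x) := by
      rw [← Wf_mul_Rex hε x, mul_assoc]
      abel
    rw [h3] at h2
    exact h2
  -- the transformed integral equation
  have key1 : ∀ t ∈ Icc (0:ℝ) 1, Z t - 1 = Wf ε t * Z t - ∫ s in (0:ℝ)..t, Pf ε s * Z s := by
    intro t ht
    have hint : IntervalIntegrable (fun s => -(Pf ε s * Z s)) volume 0 t :=
      (((Pf_cont ε).mul hZc).neg).intervalIntegrable 0 t
    have h1 := intervalIntegral.integral_eq_sub_of_hasDerivAt (fun x _ => hgd x) hint
    rw [intervalIntegral.integral_neg, hZ0, Wf_zero, zero_mul, sub_zero] at h1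
    have hI : (∫ s in (0:ℝ)..t, Pf ε s * Z s) = -(Z t - Wf ε t * Z t - 1) := by
      rw [← h1, neg_neg]
    rw [hI]
    abel
  -- Gronwall 1 : a priori bound
  have hIbound : ∀ (f : ℝ → Mat 2), Continuous f → ∀ t ∈ Icc (0:ℝ) 1,
      ‖∫ s in (0:ℝ)..t, Pf ε s * f s‖ ≤ 2 * ∫ s in (0:ℝ)..t, ‖f s‖ := by
    intro f hf t ht
    have h1 : ∀ s, ‖Pf ε s * f s‖ ≤ 2 * ‖f s‖ := fun s =>
      le_trans (norm_mul_le _ _) (mul_le_mul_of_nonneg_right (Pf_norm ε s) (norm_nonneg _))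
    have h2 : IntervalIntegrable (fun s => 2 * ‖f s‖) volume 0 t :=
      (continuous_const.mul hf.norm).intervalIntegrable 0 t
    have h3 := intervalIntegral.norm_integral_le_abs_of_norm_le
      (Filter.Eventually.of_forall fun s => h1 s) h2
    have h4 : (0:ℝ) ≤ ∫ s in (0:ℝ)..t, 2 * ‖f s‖ :=
      intervalIntegral.integral_nonneg (f := fun s => 2 * ‖f s‖) ht.1
        (fun s _ => mul_nonneg (by norm_num) (norm_nonneg _))
    rw [abs_of_nonneg h4, intervalIntegral.integral_const_mul] at h3
    exact h3
  have g1 : ∀ t ∈ Icc (0:ℝ) 1, ‖Z t‖ ≤ 2 + 4 * ∫ s in (0:ℝ)..t, ‖Z s‖ := by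
    intro t ht
    have e := key1 t ht
    have hZt : Z t = 1 + (Wf ε t * Z t - ∫ s in (0:ℝ)..t, Pf ε s * Z s) := by
      rw [← e]; abel
    have h5 : ‖Z t‖ ≤ 1 + (‖Wf ε t * Z t‖ + ‖∫ s in (0:ℝ)..t, Pf ε s * Z s‖) :=
      calc ‖Z t‖ = ‖1 + (Wf ε t * Z t - ∫ s in (0:ℝ)..t, Pf ε s * Z s)‖ := by rw [← hZt]
        _ ≤ ‖(1:Mat 2)‖ + ‖Wf ε t * Z t - ∫ s in (0:ℝ)..t, Pf ε s * Z s‖ := norm_add_le _ _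
        _ ≤ 1 + (‖Wf ε t * Z t‖ + ‖∫ s in (0:ℝ)..t, Pf ε s * Z s‖) := by
            rw [norm_one]
            exact add_le_add_right (norm_sub_le _ _) 1
    have h6 : ‖Wf ε t * Z t‖ ≤ (1/2) * ‖Z t‖ := by
      refine le_trans (norm_mul_le _ _) (mul_le_mul_of_nonneg_right ?_ (norm_nonneg _))
      calc ‖Wf ε t‖ ≤ 2 * Real.sqrt ε := Wf_norm ε t
        _ ≤ 1/2 := by linarith
    have h7 := hIbound Z hZc t ht
    linarith
  have M0 : ∀ t ∈ Icc (0:ℝ) 1, ‖Z t‖ ≤ 128 := by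
    intro t ht
    have h1 := gronwall hZc.norm (by norm_num) (by norm_num) g1 t ht
    have hexp : Real.exp (4*t) ≤ Real.exp 4 := Real.exp_le_exp.2 (by nlinarith [ht.2])
    have hexp4 : Real.exp 4 < 64 := by
      have ha := Real.exp_one_lt_d9
      have hb : Real.exp 1 ^ (4:ℕ) = Real.exp ((4:ℕ):ℝ) := Real.exp_one_pow 4
      have hc : Real.exp 1 ^ (4:ℕ) < 2.7182818286 ^ (4:ℕ) :=
        pow_lt_pow_left₀ ha (Real.exp_pos 1).le (by norm_num)
      have hd : ((2.7182818286:ℝ)) ^ (4:ℕ) < 64 := by norm_num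
      have : Real.exp ((4:ℕ):ℝ) < 64 := by rw [← hb]; linarith
      simpa using this
    nlinarith [Real.exp_pos (4*t)]
  -- Gronwall 2
  have hsplit : ∀ t ∈ Icc (0:ℝ) 1, (∫ s in (0:ℝ)..t, Pf ε s * Z s)
      = (∫ s in (0:ℝ)..t, Pf ε s * (Z s - 1)) + Vf ε t := by
    intro t ht
    have hVt : (∫ s in (0:ℝ)..t, Pf ε s) = Vf ε t := by
      have h1 := intervalIntegral.integral_eq_sub_of_hasDerivAt
        (f := Vf ε) (fun x _ => Vf_deriv hε x) ((Pf_cont ε).intervalIntegrable 0 t)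
      rw [Vf_zero, sub_zero] at h1
      exact h1
    have h2 : (∫ s in (0:ℝ)..t, Pf ε s * (Z s - 1))
        = (∫ s in (0:ℝ)..t, Pf ε s * Z s) - ∫ s in (0:ℝ)..t, Pf ε s := by
      rw [← intervalIntegral.integral_sub (f := fun s => Pf ε s * Z s) (((Pf_cont ε).mul hZc).intervalIntegrable 0 t)
        ((Pf_cont ε).intervalIntegrable 0 t)]
      apply intervalIntegral.integral_congr
      intro s _
      show Pf ε s * (Z s - 1) = Pf ε s * Z s - Pf ε s
      rw [mul_sub, mul_one]
    rw [h2, hVt]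
    abel
  have g2 : ∀ t ∈ Icc (0:ℝ) 1,
      ‖Z t - 1‖ ≤ (256 * Real.sqrt ε + ε) + 2 * ∫ s in (0:ℝ)..t, ‖Z s - 1‖ := by
    intro t ht
    have e := key1 t ht
    rw [hsplit t ht] at e
    have h5 : ‖Z t - 1‖ ≤ ‖Wf ε t * Z t‖ + (‖∫ s in (0:ℝ)..t, Pf ε s * (Z s - 1)‖
        + ‖Vf ε t‖) := by
      rw [e]
      refine le_trans (norm_sub_le _ _) (add_le_add_right (norm_add_le _ _) _)
    have h6 : ‖Wf ε t * Z t‖ ≤ 2 * Real.sqrt ε * 128 := by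
      refine le_trans (norm_mul_le _ _) ?_
      apply mul_le_mul (Wf_norm ε t) (M0 t ht) (norm_nonneg _) (by positivity)
    have h7 := hIbound (fun s => Z s - 1) (hZc.sub continuous_const) t ht
    have h8 := Vf_norm hε.le t
    linarith
  intro t ht
  have h1 := gronwall (hZc.sub continuous_const).norm (by positivity) (by norm_num) g2 t ht
  have hexp : Real.exp (2*t) ≤ Real.exp 2 := Real.exp_le_exp.2 (by nlinarith [ht.2])
  have hexp2 : Real.exp 2 < 8 := by
    have ha := Real.exp_one_lt_d9
    have hb : Real.exp 1 ^ (2:ℕ) = Real.exp ((2:ℕ):ℝ) := Real.exp_one_pow 2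
    have hc : Real.exp 1 ^ (2:ℕ) < 2.7182818286 ^ (2:ℕ) :=
      pow_lt_pow_left₀ ha (Real.exp_pos 1).le (by norm_num)
    have hd : ((2.7182818286:ℝ)) ^ (2:ℕ) < 8 := by norm_num
    have he : Real.exp ((2:ℕ):ℝ) < 8 := by rw [← hb]; linarith
    simpa using he
  have h9 : (256 * Real.sqrt ε + ε) * Real.exp (2*t) ≤ (257 * Real.sqrt ε) * 8 := by
    apply mul_le_mul (by linarith) (by linarith) (Real.exp_pos _).le (by positivity)
  calc ‖Z t - 1‖ ≤ (256 * Real.sqrt ε + ε) * Real.exp (2*t) := h1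
    _ ≤ (257 * Real.sqrt ε) * 8 := h9
    _ = 2056 * Real.sqrt ε := by ring

end Stmt15

end AuxProof

/-- **Example 1, part 2**: the family `R(·;ε)` belongs to the class `𝓜²` on `[0,1]`,
i.e. the matrix solutions of `Z' = R(t;ε)Z`, `Z(0;ε) = I₂` converge to `I₂` uniformly
on `[0,1]` as `ε → 0⁺`. -/
theorem stmt15_example1_memM : MemM 2 0 1 1 (fun ε t => Rex ε t) := by
  classical
  have hex : ∀ ε : ℝ, ∃ Z : ℝ → Mat 2, Continuous Z ∧
      ∀ t, Z t = 1 + ∫ s in (0:ℝ)..t, Rex ε s * Z s :=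
    fun ε => Stmt15.exists_Z (Stmt15.Rex_cont ε) (fun t => Stmt15.Rex_norm ε t)
  choose Z hZc hZeq using hex
  refine ⟨Z, ?_, ?_⟩
  · intro ε _
    refine ⟨?_, ?_, ?_⟩
    · exact ((Stmt15.Rex_cont ε).mul (hZc ε)).integrableOn_Icc
    · simpa using hZeq ε 0
    · exact fun t _ => hZeq ε t
  · rw [Metric.tendstoUniformlyOn_iff]
    intro e he
    have hδpos : 0 < min (1/16) ((e/2057)^2) := by positivity
    have hmem : Ioo (0:ℝ) (min (1/16) ((e/2057)^2)) ∈ 𝓝[>] (0:ℝ) :=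
      Ioo_mem_nhdsGT_of_mem ⟨le_refl 0, hδpos⟩
    filter_upwards [hmem] with ε hε
    intro t ht
    have hε0 : 0 < ε := hε.1
    have hε16 : ε ≤ 1/16 := le_trans hε.2.le (min_le_left _ _)
    have est := Stmt15.estimate hε0 hε16 (hZc ε) (hZeq ε) t ht
    have hsqlt : Real.sqrt ε < e/2057 := by
      have h1 : ε < (e/2057)^2 := lt_of_lt_of_le hε.2 (min_le_right _ _)
      have h2 : Real.sqrt ε < Real.sqrt ((e/2057)^2) := Real.sqrt_lt_sqrt hε0.le h1
      rwa [Real.sqrt_sq (by positivity)] at h2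
    rw [dist_eq_norm]
    calc ‖(1:Mat 2) - Z ε t‖ = ‖Z ε t - 1‖ := norm_sub_rev _ _
      _ ≤ 2056 * Real.sqrt ε := est
      _ < e := by linarith
end

section
/- Let [a,b] ⊂ ℝ with a < b, m, n ∈ ℕ with n ≥ 2, fixed points t₁, …, t_n ∈ [a,b], and matrices B_k(ε) ∈ ℂ^{m×m} for ε ∈ [0,ε₀], k = 1,…,n. Define the continuous linear operators U_ε : C([a,b]; ℂ^m) → ℂ^m by U_ε y := B₁(ε)y(t₁) + B₂(ε)y(t₂) + … + B_n(ε)y(t_n). Then, as ε → 0⁺, the following three conditions are equivalent: (i) ‖U_ε − U₀‖ → 0 in operator norm; (ii) U_ε y → U₀ y for every y ∈ W¹₁([a,b]; ℂ^m); (iii) B_k(ε) → B_k(0) for each k = 1, 2, …, n. -/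
open MeasureTheory Filter Set Topology

/-- Auxiliary: each coordinate is bounded by the Euclidean norm. -/
lemma stmt19_comp_le_norm (m : ℕ) (x : Vec m) (i : Fin m) : ‖x i‖ ≤ ‖x‖ := by
  rw [EuclideanSpace.norm_eq]
  calc ‖x i‖ = Real.sqrt (‖x i‖ ^ 2) := (Real.sqrt_sq (norm_nonneg _)).symm
    _ ≤ _ := Real.sqrt_le_sqrt (Finset.single_le_sum (fun j _ => sq_nonneg ‖x j‖)
        (Finset.mem_univ i))

/-- Auxiliary: the operator norm is bounded by the sum of norms of images of basis vectors. -/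
lemma stmt19_opNorm_le_sum_single (m : ℕ) (T : Mat m) :
    ‖T‖ ≤ ∑ i, ‖T (EuclideanSpace.single i (1:ℂ))‖ := by
  apply ContinuousLinearMap.opNorm_le_bound _ (Finset.sum_nonneg fun i _ => norm_nonneg _)
  intro x
  have hx : ∑ i, x i • EuclideanSpace.single i (1:ℂ) = x := by
    have := (EuclideanSpace.basisFun (Fin m) ℂ).sum_repr x
    simpa [EuclideanSpace.basisFun_apply, EuclideanSpace.basisFun_repr] using this
  have hTx : T x = ∑ i, x i • T (EuclideanSpace.single i (1:ℂ)) := by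
    conv_lhs => rw [← hx]
    rw [map_sum]
    simp
  rw [hTx, Finset.sum_mul]
  refine (norm_sum_le _ _).trans (Finset.sum_le_sum fun i _ => ?_)
  rw [norm_smul, mul_comm]
  exact mul_le_mul_of_nonneg_left (stmt19_comp_le_norm m x i) (norm_nonneg _)

/-- Auxiliary: a Lagrange-type polynomial taking value 1 at `t k` and 0 at the other nodes. -/
lemma stmt19_existsPoly (n : ℕ) (t : Fin n → ℝ) (htinj : Function.Injective t) (k : Fin n) :
    ∃ Q : Polynomial ℝ, Q.eval (t k) = 1 ∧ ∀ j : Fin n, j ≠ k → Q.eval (t j) = 0 := by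
  refine ⟨∏ j ∈ Finset.univ.erase k,
      (Polynomial.C (t k - t j)⁻¹ * (Polynomial.X - Polynomial.C (t j))), ?_, ?_⟩
  · rw [Polynomial.eval_prod]
    refine Finset.prod_eq_one fun j hj => ?_
    have h : t k - t j ≠ 0 := sub_ne_zero.2 fun h => (Finset.mem_erase.1 hj).1 (htinj h.symm)
    simp [inv_mul_cancel₀ h]
  · intro j hj
    rw [Polynomial.eval_prod]
    exact Finset.prod_eq_zero (Finset.mem_erase.2 ⟨hj, Finset.mem_univ j⟩) (by simp)

/-- Auxiliary: a smooth `W¹₁` test function supported at one node. -/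
lemma stmt19_testfun (m n : ℕ) (a b : ℝ) (t : Fin n → ℝ) (htinj : Function.Injective t)
    (k : Fin n) (v : Vec m) :
    ∃ y : ℝ → Vec m, IsW11 m a b y ∧ ContinuousOn y (Icc a b) ∧
      y (t k) = v ∧ ∀ j : Fin n, j ≠ k → y (t j) = 0 := by
  obtain ⟨Q, hQk, hQj⟩ := stmt19_existsPoly n t htinj k
  refine ⟨fun s => ((Q.eval s : ℝ) : ℂ) • v, ?_, ?_, ?_, ?_⟩
  · refine ⟨fun s => ((Q.derivative.eval s : ℝ) : ℂ) • v, ?_, ?_⟩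
    · exact ((Complex.continuous_ofReal.comp Q.derivative.continuous).smul
        continuous_const).integrableOn_Icc
    · intro τ _
      have hfd : ∀ x ∈ uIcc a τ, HasDerivAt (fun s => Q.eval s) (Q.derivative.eval x) x :=
        fun x _ => Q.hasDerivAt x
      have hint : IntervalIntegrable (fun s => Q.derivative.eval s) volume a τ :=
        Q.derivative.continuous.intervalIntegrable a τ
      have hftc := intervalIntegral.integral_eq_sub_of_hasDerivAt hfd hint
      simp only
      rw [intervalIntegral.integral_smul_const, intervalIntegral.integral_ofReal, hftc]
      push_cast
      rw [sub_smul]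
      abel
  · exact ((Complex.continuous_ofReal.comp Q.continuous).smul continuous_const).continuousOn
  · simp [hQk]
  · intro j hj; simp [hQj j hj]

/-- **Multipoint boundary operators**: for
`U_ε y = B₁(ε)y(t₁) + ⋯ + B_n(ε)y(t_n)` with fixed distinct points `t₁, …, t_n ∈ [a,b]`,
the conditions `‖U_ε − U₀‖ → 0`, `U_ε y → U₀ y` for every `y ∈ W¹₁`, and
`B_k(ε) → B_k(0)` for each `k` are mutually equivalent as `ε → 0⁺`. -/
theorem stmt19_multipoint
    (m n : ℕ) (hn : 2 ≤ n) (a b ε₀ : ℝ) (hab : a < b) (hε₀ : 0 < ε₀)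
    (t : Fin n → ℝ) (ht : ∀ k, t k ∈ Icc a b) (htinj : Function.Injective t)
    (B : Fin n → ℝ → Mat m)
    (U : ℝ → (C(Icc a b, Vec m) →L[ℂ] Vec m))
    (hU : ∀ (ε : ℝ) (g : C(Icc a b, Vec m)),
      U ε g = ∑ k, (B k ε) (g ⟨t k, ht k⟩)) :
    (Tendsto (fun ε => ‖U ε - U 0‖) (𝓝[>] (0 : ℝ)) (𝓝 0) ↔
      ∀ k, Tendsto (fun ε => B k ε) (𝓝[>] (0 : ℝ)) (𝓝 (B k 0))) ∧
    ((∀ y : ℝ → Vec m, IsW11 m a b y →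
        Tendsto (fun ε => U ε (toC m a b y)) (𝓝[>] (0 : ℝ)) (𝓝 (U 0 (toC m a b y)))) ↔
      ∀ k, Tendsto (fun ε => B k ε) (𝓝[>] (0 : ℝ)) (𝓝 (B k 0))) := by
  set l : Filter ℝ := 𝓝[>] (0 : ℝ) with hl
  -- (iii) → (i)
  have h31 : (∀ k, Tendsto (fun ε => B k ε) l (𝓝 (B k 0))) →
      Tendsto (fun ε => ‖U ε - U 0‖) l (𝓝 0) := by
    intro h3
    have hbd : ∀ ε, ‖U ε - U 0‖ ≤ ∑ k, ‖B k ε - B k 0‖ := by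
      intro ε
      apply ContinuousLinearMap.opNorm_le_bound _ (Finset.sum_nonneg fun k _ => norm_nonneg _)
      intro g
      have : (U ε - U 0) g = ∑ k, (B k ε - B k 0) (g ⟨t k, ht k⟩) := by
        simp [ContinuousLinearMap.sub_apply, hU, Finset.sum_sub_distrib]
      rw [this, Finset.sum_mul]
      refine (norm_sum_le _ _).trans (Finset.sum_le_sum fun k _ => ?_)
      calc ‖(B k ε - B k 0) (g ⟨t k, ht k⟩)‖
          ≤ ‖B k ε - B k 0‖ * ‖g ⟨t k, ht k⟩‖ := ContinuousLinearMap.le_opNorm _ _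
        _ ≤ ‖B k ε - B k 0‖ * ‖g‖ :=
            mul_le_mul_of_nonneg_left (g.norm_coe_le_norm _) (norm_nonneg _)
    have hsum : Tendsto (fun ε => ∑ k, ‖B k ε - B k 0‖) l (𝓝 0) := by
      have : Tendsto (fun ε => ∑ k : Fin n, ‖B k ε - B k 0‖) l (𝓝 (∑ _k : Fin n, (0:ℝ))) :=
        tendsto_finset_sum _ fun k _ => tendsto_iff_norm_sub_tendsto_zero.1 (h3 k)
      simpa only [Finset.sum_const_zero] using this
    exact squeeze_zero (fun ε => ContinuousLinearMap.opNorm_nonneg _) hbd hsum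
  -- (i) → (ii)
  have h12 : Tendsto (fun ε => ‖U ε - U 0‖) l (𝓝 0) →
      (∀ y : ℝ → Vec m, IsW11 m a b y →
        Tendsto (fun ε => U ε (toC m a b y)) l (𝓝 (U 0 (toC m a b y)))) := by
    intro h1 y _
    rw [tendsto_iff_norm_sub_tendsto_zero]
    have hbd : ∀ ε, ‖U ε (toC m a b y) - U 0 (toC m a b y)‖ ≤ ‖U ε - U 0‖ * ‖toC m a b y‖ := by
      intro ε
      rw [show U ε (toC m a b y) - U 0 (toC m a b y) = (U ε - U 0) (toC m a b y) from rfl]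
      exact ContinuousLinearMap.le_opNorm _ _
    have hlim : Tendsto (fun ε => ‖U ε - U 0‖ * ‖toC m a b y‖) l (𝓝 0) := by
      simpa using h1.mul_const ‖toC m a b y‖
    exact squeeze_zero (fun ε => norm_nonneg _) hbd hlim
  -- (ii) → (iii)
  have h23 : (∀ y : ℝ → Vec m, IsW11 m a b y →
      Tendsto (fun ε => U ε (toC m a b y)) l (𝓝 (U 0 (toC m a b y)))) →
      ∀ k, Tendsto (fun ε => B k ε) l (𝓝 (B k 0)) := by
    intro h2 k
    have hv : ∀ v : Vec m, Tendsto (fun ε => B k ε v) l (𝓝 (B k 0 v)) := by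
      intro v
      obtain ⟨y, hyW, hyC, hyk, hyj⟩ := stmt19_testfun m n a b t htinj k v
      have hUy : ∀ ε, U ε (toC m a b y) = B k ε v := by
        intro ε
        rw [hU]
        have htoC : ∀ j : Fin n, (toC m a b y) ⟨t j, ht j⟩ = y (t j) := by
          intro j
          simp only [toC, dif_pos hyC]
          rfl
        rw [Finset.sum_eq_single_of_mem k (Finset.mem_univ k)]
        · rw [htoC k, hyk]
        · intro j _ hj
          rw [htoC j, hyj j hj, map_zero]
      have := h2 y hyW
      rw [hUy 0] at this
      simpa only [hUy] using this
    rw [tendsto_iff_norm_sub_tendsto_zero]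
    have hbd : ∀ ε, ‖B k ε - B k 0‖ ≤
        ∑ i, ‖(B k ε - B k 0) (EuclideanSpace.single i (1:ℂ))‖ :=
      fun ε => stmt19_opNorm_le_sum_single m (B k ε - B k 0)
    have hsum : Tendsto
        (fun ε => ∑ i, ‖(B k ε - B k 0) (EuclideanSpace.single i (1:ℂ))‖) l (𝓝 0) := by
      have : Tendsto (fun ε => ∑ i : Fin m, ‖(B k ε - B k 0) (EuclideanSpace.single i (1:ℂ))‖)
          l (𝓝 (∑ _i : Fin m, (0:ℝ))) := by
        refine tendsto_finset_sum _ fun i _ => ?_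
        have := tendsto_iff_norm_sub_tendsto_zero.1 (hv (EuclideanSpace.single i (1:ℂ)))
        simpa [ContinuousLinearMap.sub_apply] using this
      simpa only [Finset.sum_const_zero] using this
    exact squeeze_zero (fun ε => norm_nonneg _) hbd hsum
  exact ⟨⟨fun h1 => h23 (h12 h1), h31⟩, ⟨h23, fun h3 => h12 (h31 h3)⟩⟩
end
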